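/- arXiv:2507.18114 — 5 statements merged into one kernel-verified Lean document; each statement's English description precedes it below -/
import Mathlib

section
/- Let n, m, l, M be positive integers and p = m + n. For each i = 1,…,M let A_i ∈ ℝ^{n×n} and B_{2,i} ∈ ℝ^{n×m}, and let B₁ ∈ ℝ^{n×l} with B₁B₁ᵀ positive definite. Suppose W ∈ 𝕊^p is positive semidefinite with block decomposition W = [[W₁, W₂],[W₂ᵀ, W₃]] (W₁ ∈ 𝕊^n, W₂ ∈ ℝ^{n×m}, W₃ ∈ 𝕊^m), W₁ is positive definite, and for every i the matrix A_iW₁ + W₁A_iᵀ + B_{2,i}W₂ᵀ + W₂B_{2,i}ᵀ + B₁B₁ᵀ is negative semidefinite (i.e. the top-left n×n block Θ_{i,1}(W) of F_iW + WF_iᵀ + Q is ⪯ 0). Then the feedback gain K = W₂ᵀW₁⁻¹ internally stabilizes every extreme system: for each i = 1,…,M, every eigenvalue of the closed-loop matrix A_i + B_{2,i}K has strictly negative real part. -/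
open Matrix Complex
open scoped ComplexOrder

lemma psd_map {p : ℕ} {P : Matrix (Fin p) (Fin p) ℝ} (hP : P.PosSemidef) :
    (P.map Complex.ofReal).PosSemidef := by
  obtain ⟨B, rfl⟩ : ∃ B : Matrix (Fin p) (Fin p) ℝ, P = Bᴴ * B := by
    open scoped MatrixOrder Matrix.Norms.L2Operator in
    exact CStarAlgebra.nonneg_iff_eq_star_mul_self.mp hP.nonneg
  have : (Bᴴ * B).map Complex.ofReal
      = (B.map Complex.ofReal)ᴴ * (B.map Complex.ofReal) := by
    ext i j
    simp [Matrix.mul_apply, Matrix.conjTranspose_apply]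
  rw [this]
  exact Matrix.posSemidef_conjTranspose_mul_self _

lemma pd_map {p : ℕ} {P : Matrix (Fin p) (Fin p) ℝ} (hP : P.PosDef) :
    (P.map Complex.ofReal).PosDef := by
  have hpsd := psd_map hP.posSemidef
  refine Matrix.PosDef.of_dotProduct_mulVec_pos hpsd.1 fun x hx => ?_
  refine lt_of_le_of_ne (hpsd.dotProduct_mulVec_nonneg x) (Ne.symm fun h0 => hx ?_)
  have hker := (hpsd.dotProduct_mulVec_zero_iff x).mp h0
  have hdet : IsUnit (P.map Complex.ofReal).det := by
    have hd := RingHom.map_det Complex.ofRealHom P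
    simp only [RingHom.mapMatrix_apply, Complex.ofRealHom_eq_coe] at hd
    rw [show (P.map Complex.ofReal) = P.map ⇑Complex.ofRealHom from rfl, ← hd]
    simp only [isUnit_iff_ne_zero, ne_eq, Complex.ofReal_eq_zero]
    exact hP.det_pos.ne'
  calc x = ((P.map Complex.ofReal)⁻¹ * (P.map Complex.ofReal)) *ᵥ x := by
        rw [Matrix.nonsing_inv_mul _ hdet, Matrix.one_mulVec]
    _ = 0 := by rw [← Matrix.mulVec_mulVec, hker, Matrix.mulVec_zero]

lemma map_mulVec_star {p : ℕ} (R : Matrix (Fin p) (Fin p) ℝ) (x : Fin p → ℂ) :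
    (R.map Complex.ofReal) *ᵥ (star x) = star ((R.map Complex.ofReal) *ᵥ x) := by
  ext j
  simp [Matrix.mulVec, dotProduct, Complex.conj_ofReal]

/-- **Theorem 2.4, part 1** (Ma et al. 2021): any `W` in the convex parameterization set `𝒞`
(with `W₁ ≻ 0`) yields a feedback gain `K = W₂ᵀ W₁⁻¹` that internally stabilizes every
extreme system, i.e. every eigenvalue of `A_i + B_{2,i} K` has strictly negative real part. -/
theorem group_sparse_LQ_parameterization_stabilizes
    (n m l M : ℕ) (hn : 0 < n) (hm : 0 < m) (hl : 0 < l) (hM : 0 < M)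
    (A : Fin M → Matrix (Fin n) (Fin n) ℝ)
    (B2 : Fin M → Matrix (Fin n) (Fin m) ℝ)
    (B1 : Matrix (Fin n) (Fin l) ℝ)
    (hB1 : (B1 * B1ᵀ).PosDef)
    (W1 : Matrix (Fin n) (Fin n) ℝ) (W2 : Matrix (Fin n) (Fin m) ℝ)
    (W3 : Matrix (Fin m) (Fin m) ℝ)
    (hW : (Matrix.fromBlocks W1 W2 W2ᵀ W3).PosSemidef)
    (hW1 : W1.PosDef)
    (hTheta : ∀ i, (-(A i * W1 + W1 * (A i)ᵀ + B2 i * W2ᵀ + W2 * (B2 i)ᵀ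
        + B1 * B1ᵀ)).PosSemidef) :
    ∀ i, ∀ μ : ℂ,
      μ ∈ spectrum ℂ ((A i + B2 i * (W2ᵀ * W1⁻¹)).map (Complex.ofReal)) → μ.re < 0 := by
  intro i μ hμ
  classical
  have hW1s : W1ᵀ = W1 := by
    have h := hW1.1
    ext a b
    simpa using congrFun (congrFun h a) b
  have hdet : IsUnit W1.det := isUnit_iff_ne_zero.mpr hW1.det_pos.ne'
  set K : Matrix (Fin m) (Fin n) ℝ := W2ᵀ * W1⁻¹ with hK
  set Ac : Matrix (Fin n) (Fin n) ℝ := A i + B2 i * K with hAc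
  -- Lyapunov identity
  have hKW1 : K * W1 = W2ᵀ := by
    rw [hK, Matrix.mul_assoc, Matrix.nonsing_inv_mul _ hdet, Matrix.mul_one]
  have hW1Kt : W1 * Kᵀ = W2 := by
    rw [hK, Matrix.transpose_mul, Matrix.transpose_nonsing_inv, hW1s, transpose_transpose,
      ← Matrix.mul_assoc, Matrix.mul_nonsing_inv _ hdet, Matrix.one_mul]
  have hL : Ac * W1 + W1 * Acᵀ
      = A i * W1 + W1 * (A i)ᵀ + B2 i * W2ᵀ + W2 * (B2 i)ᵀ := by
    rw [hAc, transpose_add, transpose_mul, add_mul, mul_add, Matrix.mul_assoc, hKW1,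
      ← Matrix.mul_assoc, hW1Kt]
    abel
  -- complexifications
  set Acc : Matrix (Fin n) (Fin n) ℂ := Ac.map Complex.ofReal with hAccdef
  set P : Matrix (Fin n) (Fin n) ℂ := W1.map Complex.ofReal with hPdef
  set Qc : Matrix (Fin n) (Fin n) ℂ := (B1 * B1ᵀ).map Complex.ofReal with hQcdef
  set Nc : Matrix (Fin n) (Fin n) ℂ :=
    (-(A i * W1 + W1 * (A i)ᵀ + B2 i * W2ᵀ + W2 * (B2 i)ᵀ + B1 * B1ᵀ)).map Complex.ofReal
    with hNcdef
  -- eigenvector of the transpose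
  have hsing : ¬ IsUnit (μ • (1 : Matrix (Fin n) (Fin n) ℂ) - Acc) := by
    have h := spectrum.mem_iff.mp hμ
    simpa [Algebra.algebraMap_eq_smul_one] using h
  have hdet0 : ((μ • (1 : Matrix (Fin n) (Fin n) ℂ) - Acc)ᵀ).det = 0 := by
    rw [Matrix.det_transpose]
    by_contra h
    exact hsing ((Matrix.isUnit_iff_isUnit_det _).mpr (isUnit_iff_ne_zero.mpr h))
  obtain ⟨v, hv0, hv⟩ := (Matrix.exists_mulVec_eq_zero_iff).mpr hdet0
  have heig : Accᵀ *ᵥ v = μ • v := by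
    rw [transpose_sub, transpose_smul, transpose_one, sub_mulVec,
      Matrix.smul_mulVec, Matrix.one_mulVec] at hv
    exact (sub_eq_zero.mp hv).symm
  -- conjugate eigenvector relation
  have hAccT : Accᵀ = (Acᵀ).map Complex.ofReal := by
    ext a b; simp [hAccdef]
  have hstar : Accᵀ *ᵥ star v = (starRingEnd ℂ μ) • star v := by
    rw [hAccT, map_mulVec_star, ← hAccT, heig, star_smul]
    rfl
  -- the quadratic forms
  set c : ℂ := star v ⬝ᵥ P *ᵥ v with hcdef
  have hcpos : 0 < c := (pd_map hW1).dotProduct_mulVec_pos hv0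
  have hqpos : 0 < star v ⬝ᵥ Qc *ᵥ v := (pd_map hB1).dotProduct_mulVec_pos hv0
  have htnn : 0 ≤ star v ⬝ᵥ Nc *ᵥ v := (psd_map (hTheta i)).dotProduct_mulVec_nonneg v
  -- the Lyapunov quantity, computed two ways
  have hmap : (Ac * W1 + W1 * Acᵀ).map Complex.ofReal = Acc * P + P * Accᵀ := by
    ext a b
    simp [hAccdef, hPdef, Matrix.mul_apply, Matrix.add_apply, Matrix.map_apply]
  have hmap2 : (Ac * W1 + W1 * Acᵀ).map Complex.ofReal = -Nc - Qc := by
    rw [hL, hNcdef, hQcdef]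
    ext a b
    simp [Matrix.map_apply, Matrix.add_apply, Matrix.neg_apply, Matrix.sub_apply]
  have hs1 : star v ⬝ᵥ (Acc * P + P * Accᵀ) *ᵥ v = (starRingEnd ℂ μ + μ) * c := by
    rw [Matrix.add_mulVec, dotProduct_add, ← Matrix.mulVec_mulVec, ← Matrix.mulVec_mulVec,
      heig, Matrix.mulVec_smul, dotProduct_smul, Matrix.dotProduct_mulVec,
      ← transpose_transpose Acc, Matrix.vecMul_transpose]
    rw [hstar, smul_dotProduct]
    simp only [smul_eq_mul, ← hcdef]
    ring
  have hs2 : star v ⬝ᵥ (Acc * P + P * Accᵀ) *ᵥ v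
      = -(star v ⬝ᵥ Nc *ᵥ v) - star v ⬝ᵥ Qc *ᵥ v := by
    rw [← hmap, hmap2, Matrix.sub_mulVec, Matrix.neg_mulVec, dotProduct_sub, dotProduct_neg]
  -- take real parts
  have hkey : ((starRingEnd ℂ μ + μ) * c).re
      = (-(star v ⬝ᵥ Nc *ᵥ v) - star v ⬝ᵥ Qc *ᵥ v).re := by rw [← hs1, hs2]
  have hconj : starRingEnd ℂ μ + μ = ((2 * μ.re : ℝ) : ℂ) := by
    rw [add_comm]; exact_mod_cast Complex.add_conj μ
  have hcre : 0 < c.re := (Complex.lt_def.mp hcpos).1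
  have hqre : 0 < (star v ⬝ᵥ Qc *ᵥ v).re := (Complex.lt_def.mp hqpos).1
  have htre : 0 ≤ (star v ⬝ᵥ Nc *ᵥ v).re := (Complex.le_def.mp htnn).1
  rw [hconj] at hkey
  simp only [Complex.mul_re, Complex.ofReal_re, Complex.ofReal_im, Complex.sub_re,
    Complex.neg_re, zero_mul, sub_zero] at hkey
  nlinarith [hkey, hcre, hqre, htre]
end

section
/- Let n, m, l, q, M be positive integers and p = m + n. For each i = 1,…,M let A_i ∈ ℝ^{n×n} and B_{2,i} ∈ ℝ^{n×m}; let B₁ ∈ ℝ^{n×l} with B₁B₁ᵀ positive definite, and let C ∈ ℝ^{q×n}, D ∈ ℝ^{q×m} satisfy CᵀD = 0, CᵀC ≻ 0, DᵀD ≻ 0. Set R = blockdiag(CᵀC, DᵀD) ∈ 𝕊^p. Suppose W ∈ 𝕊^p is positive semidefinite with blocks W = [[W₁, W₂],[W₂ᵀ, W₃]], W₁ ≻ 0, and for every i the matrix A_iW₁ + W₁A_iᵀ + B_{2,i}W₂ᵀ + W₂B_{2,i}ᵀ + B₁B₁ᵀ is negative semidefinite. Let K = W₂ᵀW₁⁻¹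 and, for each i, let W_{c,i} ∈ 𝕊^n be a symmetric solution of the closed-loop Lyapunov equation (A_i + B_{2,i}K)W_{c,i} + W_{c,i}(A_i + B_{2,i}K)ᵀ + B₁B₁ᵀ = 0 (the controllability Gramian of the i-th extreme closed-loop system; it is unique and positive semidefinite since the closed loop is Hurwitz). Then for every i = 1,…,M, Tr(RW) ≥ Tr((CᵀC + KᵀDᵀDK)·W_{c,i}); that is, the convex objective ⟨R, W⟩ is an upper bound on the squared H₂-norm ‖H_i(s)‖²_{H₂} of each extreme closed-loop system. -/
open Matrix

lemma my_psd_trace_nonneg {n : ℕ} {P : Matrix (Fin n) (Fin n) ℝ} (hP : P.PosSemidef) :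
    0 ≤ P.trace := by
  rw [Matrix.trace]
  refine Finset.sum_nonneg fun i _ => ?_
  have := hP.dotProduct_mulVec_nonneg (Pi.single i 1)
  simpa [dotProduct, Matrix.mulVec, Pi.single_apply, Finset.sum_ite_eq,
    Matrix.diag] using this

lemma my_trace_mul_nonneg {n : ℕ} {P Q : Matrix (Fin n) (Fin n) ℝ}
    (hP : P.PosSemidef) (hQ : Q.PosSemidef) : 0 ≤ (P * Q).trace := by
  classical
  open scoped MatrixOrder in
  obtain ⟨B, rfl⟩ := CStarAlgebra.nonneg_iff_eq_star_mul_self.mp hQ.nonneg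
  rw [star_eq_conjTranspose, ← Matrix.mul_assoc, Matrix.trace_mul_comm, ← Matrix.mul_assoc]
  exact my_psd_trace_nonneg (hP.mul_mul_conjTranspose_same B)

-- quadratic forms are continuous on plain pi space
lemma my_quadform_continuous {n : ℕ} (Mt : Matrix (Fin n) (Fin n) ℝ) :
    Continuous fun u : Fin n → ℝ => u ⬝ᵥ Mt *ᵥ u := by
  simp only [dotProduct, Matrix.mulVec]
  exact continuous_finset_sum _ fun i _ => (continuous_apply i).mul
    (continuous_finset_sum _ fun j _ => continuous_const.mul (continuous_apply j))

-- scaling of quadratic form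
lemma my_quadform_smul {n : ℕ} (Mt : Matrix (Fin n) (Fin n) ℝ) (c : ℝ) (u : Fin n → ℝ) :
    (c • u) ⬝ᵥ Mt *ᵥ (c • u) = c ^ 2 * (u ⬝ᵥ Mt *ᵥ u) := by
  rw [Matrix.mulVec_smul, dotProduct_smul, smul_dotProduct]
  simp [smul_eq_mul]; ring

lemma my_dotProduct_self_nonneg {n : ℕ} (u : Fin n → ℝ) : 0 ≤ u ⬝ᵥ u :=
  Finset.sum_nonneg fun i _ => mul_self_nonneg _

/-- minimum of a quadratic form relative to `u ⬝ᵥ u`. -/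
lemma my_quadform_exists_min {n : ℕ} (hn : 0 < n) (Mt : Matrix (Fin n) (Fin n) ℝ) :
    ∃ ε : ℝ, (∃ u₀ : Fin n → ℝ, u₀ ≠ 0 ∧ u₀ ⬝ᵥ Mt *ᵥ u₀ = ε) ∧
      ∀ u : Fin n → ℝ, ε * (u ⬝ᵥ u) ≤ u ⬝ᵥ Mt *ᵥ u := by
  classical
  set E := EuclideanSpace ℝ (Fin n)
  let f : E → ℝ := fun u => (u : Fin n → ℝ) ⬝ᵥ Mt *ᵥ (u : Fin n → ℝ)
  have hfc : Continuous f := (my_quadform_continuous Mt).comp (PiLp.continuous_ofLp 2 _)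
  have hsc : IsCompact (Metric.sphere (0 : E) 1) := isCompact_sphere _ _
  have hne : (Metric.sphere (0 : E) 1).Nonempty := by
    refine ⟨EuclideanSpace.single ⟨0, hn⟩ 1, ?_⟩
    rw [mem_sphere_zero_iff_norm, EuclideanSpace.norm_single]; norm_num
  obtain ⟨w, hw_mem, hw_min⟩ := hsc.exists_isMinOn hne hfc.continuousOn
  have hw_norm : ‖w‖ = 1 := by simpa using hw_mem
  refine ⟨f w, ⟨w, ?_, rfl⟩, ?_⟩
  · intro h0
    rw [show w = (0 : E) from by simpa using congrArg (WithLp.toLp 2) h0] at hw_norm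
    simp at hw_norm
  · intro u
    rcases eq_or_ne u 0 with rfl | hu
    · simp [f]
    · -- normalize u
      set uE : E := (WithLp.equiv 2 (Fin n → ℝ)).symm u
      have huE : uE ≠ 0 := by
        intro h; apply hu
        simpa [uE] using congrArg WithLp.ofLp h
      have hnorm_pos : (0:ℝ) < ‖uE‖ := norm_pos_iff.mpr huE
      set c : ℝ := ‖uE‖
      have hmem : (c⁻¹ • uE) ∈ Metric.sphere (0 : E) 1 := by
        simp [norm_smul, abs_of_pos (inv_pos.mpr hnorm_pos), c,
          inv_mul_cancel₀ hnorm_pos.ne']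
      have hval : f (c⁻¹ • uE) = c⁻¹ ^ 2 * (u ⬝ᵥ Mt *ᵥ u) := by
        have : ((c⁻¹ • uE : E) : Fin n → ℝ) = c⁻¹ • u := rfl
        simp only [f, this, my_quadform_smul]
      have hmin := hw_min hmem
      have hnorm_sq : u ⬝ᵥ u = c ^ 2 := by
        have h1 : ‖uE‖ ^ 2 = (∑ i, u i ^ 2) := by
          rw [EuclideanSpace.norm_eq]
          rw [Real.sq_sqrt (Finset.sum_nonneg fun i _ => sq_nonneg _)]
          simp [uE, sq_abs]
        have h2 : u ⬝ᵥ u = ∑ i, u i ^ 2 := by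
          simp [dotProduct, sq]
        rw [h2, ← h1]
      -- f w ≤ c⁻² * quad u, so f w * c² ≤ quad u
      have : f w * c ^ 2 ≤ u ⬝ᵥ Mt *ᵥ u := by
        have := mul_le_mul_of_nonneg_right (hmin.trans_eq hval) (sq_nonneg c)
        calc f w * c ^ 2 ≤ c⁻¹ ^ 2 * (u ⬝ᵥ Mt *ᵥ u) * c ^ 2 := this
          _ = u ⬝ᵥ Mt *ᵥ u := by
              field_simp
      rw [hnorm_sq]
      exact this

-- derivative of t ↦ exp(t A) *ᵥ v
lemma my_hasDerivAt_exp_mulVec {n : ℕ} (A : Matrix (Fin n) (Fin n) ℝ) (v : Fin n → ℝ) (t : ℝ) :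
    HasDerivAt (fun s : ℝ => NormedSpace.exp (s • A) *ᵥ v)
      (A *ᵥ (NormedSpace.exp (t • A) *ᵥ v)) t := by
  letI : NormedRing (Matrix (Fin n) (Fin n) ℝ) := Matrix.linftyOpNormedRing
  letI : NormedAlgebra ℝ (Matrix (Fin n) (Fin n) ℝ) := Matrix.linftyOpNormedAlgebra
  have hexp : HasDerivAt (fun s : ℝ => NormedSpace.exp (s • A))
      (A * NormedSpace.exp (t • A)) t := hasDerivAt_exp_smul_const' A t
  let L : Matrix (Fin n) (Fin n) ℝ →ₗ[ℝ] (Fin n → ℝ) :=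
    { toFun := fun M => M *ᵥ v
      map_add' := fun M N => Matrix.add_mulVec M N v
      map_smul' := fun c M => by simp [Matrix.smul_mulVec] }
  have hL : Continuous L := L.continuous_of_finiteDimensional
  have := (L.toContinuousLinearMap.hasFDerivAt (x := NormedSpace.exp (t • A))).comp_hasDerivAt
      t hexp
  have h2 : HasDerivAt (fun s : ℝ => NormedSpace.exp (s • A) *ᵥ v)
      ((A * NormedSpace.exp (t • A)) *ᵥ v) t := this
  simpa [L, Matrix.mulVec_mulVec, Function.comp] using h2

lemma my_hasDerivAt_quadform {n : ℕ} (Mt : Matrix (Fin n) (Fin n) ℝ)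
    {x : ℝ → (Fin n → ℝ)} {x' : Fin n → ℝ} {t : ℝ} (hx : HasDerivAt x x' t) :
    HasDerivAt (fun s => x s ⬝ᵥ Mt *ᵥ x s)
      (x' ⬝ᵥ Mt *ᵥ x t + x t ⬝ᵥ Mt *ᵥ x') t := by
  have hxi : ∀ i, HasDerivAt (fun s => x s i) (x' i) t := fun i => hasDerivAt_pi.1 hx i
  have : HasDerivAt (fun s => ∑ i, x s i * ∑ j, Mt i j * x s j)
      (∑ i, (x' i * ∑ j, Mt i j * x t j + x t i * ∑ j, Mt i j * x' j)) t := by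
    refine HasDerivAt.fun_sum fun i _ => ?_
    exact (hxi i).fun_mul (HasDerivAt.fun_sum fun j _ => (hxi j).const_mul (Mt i j))
  have hfun : (fun s => x s ⬝ᵥ Mt *ᵥ x s) = fun s => ∑ i, x s i * ∑ j, Mt i j * x s j := by
    funext s; simp [dotProduct, Matrix.mulVec]
  rw [hfun]
  convert this using 1
  simp [dotProduct, Matrix.mulVec, Finset.sum_add_distrib]

lemma my_quad_deriv_eq {n : ℕ} (A Mt : Matrix (Fin n) (Fin n) ℝ) (u : Fin n → ℝ) :
    (Aᵀ *ᵥ u) ⬝ᵥ Mt *ᵥ u + u ⬝ᵥ Mt *ᵥ (Aᵀ *ᵥ u) = u ⬝ᵥ ((A * Mt + Mt * Aᵀ) *ᵥ u) := by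
  rw [Matrix.add_mulVec, dotProduct_add]
  congr 1
  · rw [Matrix.mulVec_transpose, ← Matrix.dotProduct_mulVec, ← Matrix.mulVec_mulVec]
  · rw [← Matrix.mulVec_mulVec]

lemma my_posdef_lower {n : ℕ} (hn : 0 < n) {Q : Matrix (Fin n) (Fin n) ℝ} (hQ : Q.PosDef) :
    ∃ ε : ℝ, 0 < ε ∧ ∀ u : Fin n → ℝ, ε * (u ⬝ᵥ u) ≤ u ⬝ᵥ Q *ᵥ u := by
  obtain ⟨ε, ⟨u₀, hu₀, hval⟩, hmin⟩ := my_quadform_exists_min hn Q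
  refine ⟨ε, ?_, hmin⟩
  have := hQ.dotProduct_mulVec_pos hu₀
  rw [← hval]
  simpa using this

lemma my_quadform_upper {n : ℕ} (hn : 0 < n) (P : Matrix (Fin n) (Fin n) ℝ) :
    ∃ c : ℝ, 1 ≤ c ∧ ∀ u : Fin n → ℝ, u ⬝ᵥ P *ᵥ u ≤ c * (u ⬝ᵥ u) := by
  obtain ⟨ε, _, hmin⟩ := my_quadform_exists_min hn (-P)
  refine ⟨max (-ε) 1, le_max_right _ _, fun u => ?_⟩
  have h1 := hmin u
  rw [Matrix.neg_mulVec, dotProduct_neg] at h1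
  have h2 : u ⬝ᵥ P *ᵥ u ≤ (-ε) * (u ⬝ᵥ u) := by linarith
  exact h2.trans (mul_le_mul_of_nonneg_right (le_max_left _ _) (my_dotProduct_self_nonneg u))

/-- PSD quadratic-form inequality over ℝ. -/
lemma my_psd_quad_nonneg {n : ℕ} {S : Matrix (Fin n) (Fin n) ℝ} (hS : S.PosSemidef)
    (u : Fin n → ℝ) : 0 ≤ u ⬝ᵥ S *ᵥ u := by
  simpa using hS.dotProduct_mulVec_nonneg u

/-- Core analytic lemma: Lyapunov comparison gives positive semidefiniteness. -/
lemma my_lyap_psd {n : ℕ} (hn : 0 < n) (A P Q Δ : Matrix (Fin n) (Fin n) ℝ)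
    (hP : P.PosDef) (hQ : Q.PosDef)
    (h1 : (-(A * P + P * Aᵀ + Q)).PosSemidef)
    (hΔs : Δ.IsSymm)
    (h2 : (-(A * Δ + Δ * Aᵀ)).PosSemidef) : Δ.PosSemidef := by
  refine Matrix.PosSemidef.of_dotProduct_mulVec_nonneg ?_ fun v => ?_
  · rw [Matrix.IsHermitian, Matrix.conjTranspose_eq_transpose_of_trivial]
    exact hΔs
  suffices h : 0 ≤ v ⬝ᵥ Δ *ᵥ v by simpa using h
  -- trajectory
  set x : ℝ → (Fin n → ℝ) := fun t => NormedSpace.exp (t • Aᵀ) *ᵥ v with hxdef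
  have hx : ∀ t, HasDerivAt x (Aᵀ *ᵥ x t) t := fun t => by
    simpa [hxdef, Matrix.mulVec_mulVec] using my_hasDerivAt_exp_mulVec Aᵀ v t
  have hx0 : x 0 = v := by simp [hxdef]
  -- derivative of quadratic forms along x
  have hquad : ∀ (Mt : Matrix (Fin n) (Fin n) ℝ) (t : ℝ),
      HasDerivAt (fun s => x s ⬝ᵥ Mt *ᵥ x s) (x t ⬝ᵥ ((A * Mt + Mt * Aᵀ) *ᵥ x t)) t := by
    intro Mt t
    have := my_hasDerivAt_quadform Mt (hx t)
    rwa [my_quad_deriv_eq A Mt (x t)] at this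
  -- constants
  obtain ⟨εQ, hεQ, hQlow⟩ := my_posdef_lower hn hQ
  obtain ⟨c, hc1, hPup⟩ := my_quadform_upper hn P
  obtain ⟨β, hβ, hPlow⟩ := my_posdef_lower hn hP
  have hc0 : (0:ℝ) < c := lt_of_lt_of_le one_pos hc1
  set α : ℝ := εQ / c with hαdef
  have hα : 0 < α := div_pos hεQ hc0
  -- V decays
  set V : ℝ → ℝ := fun t => x t ⬝ᵥ P *ᵥ x t with hVdef
  have hVderiv_le : ∀ t, x t ⬝ᵥ ((A * P + P * Aᵀ) *ᵥ x t) ≤ -α * V t := by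
    intro t
    have hpsd := my_psd_quad_nonneg h1 (x t)
    rw [Matrix.neg_mulVec, dotProduct_neg] at hpsd
    rw [Matrix.add_mulVec, dotProduct_add] at hpsd
    have hQx := hQlow (x t)
    have hPx := hPup (x t)
    have hαP : α * V t ≤ εQ * (x t ⬝ᵥ x t) := by
      rw [hαdef, hVdef]
      calc εQ / c * (x t ⬝ᵥ P *ᵥ x t) ≤ εQ / c * (c * (x t ⬝ᵥ x t)) := by
            apply mul_le_mul_of_nonneg_left hPx (le_of_lt (div_pos hεQ hc0))
        _ = εQ * (x t ⬝ᵥ x t) := by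
            rw [div_mul_eq_mul_div, mul_left_comm, mul_div_cancel_left₀ _ hc0.ne']
    have : x t ⬝ᵥ ((A * P + P * Aᵀ) *ᵥ x t) ≤ - (x t ⬝ᵥ Q *ᵥ x t) := by linarith
    linarith
  -- g = exp(α t) * V t is antitone
  have hVd : ∀ t, HasDerivAt V (x t ⬝ᵥ ((A * P + P * Aᵀ) *ᵥ x t)) t := fun t => hquad P t
  set g : ℝ → ℝ := fun t => Real.exp (α * t) * V t with hgdef
  have hgd : ∀ t, HasDerivAt g
      (α * Real.exp (α * t) * V t + Real.exp (α * t) * (x t ⬝ᵥ ((A * P + P * Aᵀ) *ᵥ x t))) t := by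
    intro t
    have he : HasDerivAt (fun s => Real.exp (α * s)) (α * Real.exp (α * t)) t := by
      have := ((hasDerivAt_id t).const_mul α).exp
      simpa [mul_comm] using this
    simpa [hgdef] using he.fun_mul (hVd t)
  have hganti : Antitone g := by
    refine antitone_of_hasDerivAt_nonpos hgd ?_
    intro t
    have h1' := hVderiv_le t
    have hexp_pos : 0 < Real.exp (α * t) := Real.exp_pos _
    have hkey : Real.exp (α * t) * (x t ⬝ᵥ ((A * P + P * Aᵀ) *ᵥ x t)) ≤
        Real.exp (α * t) * (-α * V t) := mul_le_mul_of_nonneg_left h1' hexp_pos.le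
    have : α * Real.exp (α * t) * V t + Real.exp (α * t) * (x t ⬝ᵥ ((A * P + P * Aᵀ) *ᵥ x t))
        ≤ 0 := by nlinarith
    simpa using this
  have hVbound : ∀ t, 0 ≤ t → V t ≤ V 0 * Real.exp (-(α * t)) := by
    intro t ht
    have := hganti ht  -- g t ≤ g 0
    rw [hgdef] at this
    simp only at this
    have h0 : Real.exp (α * 0) = 1 := by norm_num
    rw [h0, one_mul] at this
    have hpos : 0 < Real.exp (α * t) := Real.exp_pos _
    calc V t = (Real.exp (α * t) * V t) * Real.exp (-(α*t)) := by
          rw [mul_comm (Real.exp (α * t)) (V t), mul_assoc, ← Real.exp_add]; simp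
      _ ≤ V 0 * Real.exp (-(α*t)) := by
          apply mul_le_mul_of_nonneg_right this (Real.exp_pos _).le
  -- x t ⬝ᵥ x t → 0
  have hxx_le : ∀ t, 0 ≤ t → x t ⬝ᵥ x t ≤ (V 0 / β) * Real.exp (-(α * t)) := by
    intro t ht
    have h1' := hPlow (x t)
    have h2' := hVbound t ht
    rw [div_mul_eq_mul_div, le_div_iff₀ hβ]
    calc (x t ⬝ᵥ x t) * β = β * (x t ⬝ᵥ x t) := mul_comm _ _
      _ ≤ x t ⬝ᵥ P *ᵥ x t := h1'
      _ = V t := rfl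
      _ ≤ V 0 * Real.exp (-(α * t)) := h2'
  have hexp_tendsto : Filter.Tendsto (fun t : ℝ => (V 0 / β) * Real.exp (-(α * t)))
      Filter.atTop (nhds 0) := by
    have h1 : Filter.Tendsto (fun t : ℝ => Real.exp (-(α * t))) Filter.atTop (nhds 0) := by
      apply Real.tendsto_exp_atBot.comp
      apply Filter.tendsto_neg_atBot_iff.mpr
      have hαne : α ≠ 0 := hα.ne'
      exact (Filter.tendsto_atTop_atTop_of_monotone
        (fun a b hab => by nlinarith) (fun b => ⟨b / α + 1, by
          have hb : α * (b / α) = b := by field_simp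
          nlinarith⟩))
    have := h1.const_mul (V 0 / β)
    simpa using this
  have hxx_tendsto : Filter.Tendsto (fun t => x t ⬝ᵥ x t) Filter.atTop (nhds 0) := by
    apply squeeze_zero' (Filter.eventually_atTop.2 ⟨0, fun t ht => my_dotProduct_self_nonneg _⟩)
      (Filter.eventually_atTop.2 ⟨0, fun t ht => hxx_le t ht⟩) hexp_tendsto
  -- x → 0 coordinatewise
  have hx_tendsto : Filter.Tendsto x Filter.atTop (nhds 0) := by
    rw [tendsto_pi_nhds]
    intro i
    have hsq : Filter.Tendsto (fun t => (x t i) ^ 2) Filter.atTop (nhds 0) := by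
      apply squeeze_zero (fun t => sq_nonneg _) (fun t => ?_) hxx_tendsto
      have h := Finset.single_le_sum (f := fun j => x t j * x t j)
        (fun j _ => mul_self_nonneg _) (Finset.mem_univ i)
      rw [pow_two]
      simpa [dotProduct] using h
    have habs : Filter.Tendsto (fun t => |x t i|) Filter.atTop (nhds 0) := by
      have := hsq.sqrt
      simpa [Real.sqrt_sq_eq_abs] using this
    exact tendsto_zero_iff_abs_tendsto_zero _ |>.2 habs
  -- h t = x t ⬝ᵥ Δ *ᵥ x t
  set hh : ℝ → ℝ := fun t => x t ⬝ᵥ Δ *ᵥ x t with hhdef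
  have hh_tendsto : Filter.Tendsto hh Filter.atTop (nhds 0) := by
    have hcont := my_quadform_continuous Δ
    have := hcont.tendsto (0 : Fin n → ℝ)
    have h0 : (0 : Fin n → ℝ) ⬝ᵥ Δ *ᵥ (0 : Fin n → ℝ) = 0 := by simp
    rw [h0] at this
    exact this.comp hx_tendsto
  have hh_anti : Antitone hh := by
    refine antitone_of_hasDerivAt_nonpos (f' := fun t => x t ⬝ᵥ ((A * Δ + Δ * Aᵀ) *ᵥ x t))
      (fun t => hquad Δ t) ?_
    intro t
    have h := my_psd_quad_nonneg h2 (x t)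
    rw [Matrix.neg_mulVec, dotProduct_neg] at h
    simpa using (by linarith : x t ⬝ᵥ ((A * Δ + Δ * Aᵀ) *ᵥ x t) ≤ 0)
  have : (0:ℝ) ≤ hh 0 := by
    apply le_of_tendsto hh_tendsto
    exact Filter.eventually_atTop.2 ⟨0, fun t ht => hh_anti ht⟩
  rw [hhdef] at this
  simpa [hx0] using this

lemma my_trace_fromBlocks {n m : ℕ} (A : Matrix (Fin n) (Fin n) ℝ) (B : Matrix (Fin n) (Fin m) ℝ)
    (C : Matrix (Fin m) (Fin n) ℝ) (D : Matrix (Fin m) (Fin m) ℝ) :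
    (Matrix.fromBlocks A B C D).trace = A.trace + D.trace := by
  simp [Matrix.trace, Fintype.sum_sum_type, Matrix.fromBlocks, Matrix.diag]

/-- **Theorem 2.4, part 2** (Ma et al. 2021): for any `W` in the convex parameterization set
`𝒞` (with `W₁ ≻ 0`), the objective `⟨R, W⟩ = Tr(RW)` upper bounds the squared `H₂`-norm
`Tr((CᵀC + KᵀDᵀDK) W_{c,i})` of each extreme closed-loop system, where `K = W₂ᵀW₁⁻¹` and
`W_{c,i}` is the (symmetric) controllability Gramian solving the closed-loop Lyapunov
equation. -/
theorem group_sparse_LQ_parameterization_H2_bound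
    (n m l q M : ℕ) (hn : 0 < n) (hm : 0 < m) (hl : 0 < l) (hq : 0 < q) (hM : 0 < M)
    (A : Fin M → Matrix (Fin n) (Fin n) ℝ)
    (B2 : Fin M → Matrix (Fin n) (Fin m) ℝ)
    (B1 : Matrix (Fin n) (Fin l) ℝ)
    (hB1 : (B1 * B1ᵀ).PosDef)
    (C : Matrix (Fin q) (Fin n) ℝ) (D : Matrix (Fin q) (Fin m) ℝ)
    (hCD : Cᵀ * D = 0) (hC : (Cᵀ * C).PosDef) (hD : (Dᵀ * D).PosDef)
    (W1 : Matrix (Fin n) (Fin n) ℝ) (W2 : Matrix (Fin n) (Fin m) ℝ)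
    (W3 : Matrix (Fin m) (Fin m) ℝ)
    (hW : (Matrix.fromBlocks W1 W2 W2ᵀ W3).PosSemidef)
    (hW1 : W1.PosDef)
    (hTheta : ∀ i, (-(A i * W1 + W1 * (A i)ᵀ + B2 i * W2ᵀ + W2 * (B2 i)ᵀ
        + B1 * B1ᵀ)).PosSemidef)
    (K : Matrix (Fin m) (Fin n) ℝ) (hK : K = W2ᵀ * W1⁻¹)
    (Wc : Fin M → Matrix (Fin n) (Fin n) ℝ)
    (hWcSymm : ∀ i, (Wc i).IsSymm)
    (hLyap : ∀ i, (A i + B2 i * K) * Wc i + Wc i * (A i + B2 i * K)ᵀ + B1 * B1ᵀ = 0) :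
    ∀ i, ((Cᵀ * C + Kᵀ * (Dᵀ * D) * K) * Wc i).trace
      ≤ ((Matrix.fromBlocks (Cᵀ * C) 0 0 (Dᵀ * D))
          * (Matrix.fromBlocks W1 W2 W2ᵀ W3)).trace := by
  intro i
  -- invertibility of W1
  have hdet : IsUnit W1.det := isUnit_iff_ne_zero.mpr hW1.det_pos.ne'
  haveI : Invertible W1 := W1.invertibleOfIsUnitDet hdet
  have hW1symm : W1ᵀ = W1 := by
    have h := hW1.1.eq
    rwa [Matrix.conjTranspose_eq_transpose_of_trivial] at h
  have hW1inv_symm : (W1⁻¹)ᵀ = W1⁻¹ := by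
    rw [Matrix.transpose_nonsing_inv, hW1symm]
  have hKW1 : K * W1 = W2ᵀ := by
    rw [hK, Matrix.mul_assoc, Matrix.nonsing_inv_mul _ hdet, Matrix.mul_one]
  have hW2 : W2 = W1 * Kᵀ := by
    have := congrArg Matrix.transpose hKW1
    rw [Matrix.transpose_mul, hW1symm, Matrix.transpose_transpose] at this
    exact this.symm
  set Acl : Matrix (Fin n) (Fin n) ℝ := A i + B2 i * K with hAcl
  set Qm : Matrix (Fin n) (Fin n) ℝ := B1 * B1ᵀ with hQm
  -- closed-loop Lyapunov inequality for W1
  have hS1eq : A i * W1 + W1 * (A i)ᵀ + B2 i * W2ᵀ + W2 * (B2 i)ᵀ + Qm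
      = Acl * W1 + W1 * Aclᵀ + Qm := by
    have e1 : Acl * W1 = A i * W1 + B2 i * W2ᵀ := by
      rw [hAcl, Matrix.add_mul, Matrix.mul_assoc, hKW1]
    have e2 : W1 * Aclᵀ = W1 * (A i)ᵀ + W2 * (B2 i)ᵀ := by
      rw [hAcl, Matrix.transpose_add, Matrix.transpose_mul, Matrix.mul_add,
        ← Matrix.mul_assoc, ← hW2]
    rw [e1, e2]
    abel
  have hS1 : (-(Acl * W1 + W1 * Aclᵀ + Qm)).PosSemidef := by
    rw [← hS1eq]; exact hTheta i
  -- the difference Δ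
  set Δ : Matrix (Fin n) (Fin n) ℝ := W1 - Wc i with hΔ
  have hΔsymm : Δ.IsSymm := by
    rw [Matrix.IsSymm, hΔ, Matrix.transpose_sub, hW1symm, (hWcSymm i)]
  have hΔeq : Acl * Δ + Δ * Aclᵀ = Acl * W1 + W1 * Aclᵀ + Qm := by
    have hL := hLyap i
    rw [← hAcl] at hL
    have : Acl * Δ + Δ * Aclᵀ
        = (Acl * W1 + W1 * Aclᵀ + Qm) - (Acl * Wc i + Wc i * Aclᵀ + Qm) := by
      rw [hΔ]; noncomm_ring
    rw [this, show Acl * Wc i + Wc i * Aclᵀ + Qm = 0 from hL, sub_zero]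
  have hΔpsd : Δ.PosSemidef := by
    refine my_lyap_psd hn Acl W1 Qm Δ hW1 hB1 hS1 hΔsymm ?_
    rw [hΔeq]; exact hS1
  -- the cost matrix X is PSD
  set X : Matrix (Fin n) (Fin n) ℝ := Cᵀ * C + Kᵀ * (Dᵀ * D) * K with hX
  have hXpsd : X.PosSemidef := by
    refine Matrix.PosSemidef.add hC.posSemidef ?_
    have := hD.posSemidef.conjTranspose_mul_mul_same K
    rwa [Matrix.conjTranspose_eq_transpose_of_trivial] at this
  -- step 1: Tr(X Wc) ≤ Tr(X W1)
  have hstep1 : (X * Wc i).trace ≤ (X * W1).trace := by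
    have hpos := my_trace_mul_nonneg hXpsd hΔpsd
    rw [hΔ, Matrix.mul_sub, Matrix.trace_sub] at hpos
    linarith
  -- step 2: Tr(Kᵀ(DᵀD)K W1) = Tr((DᵀD)(K W1 Kᵀ)) ≤ Tr((DᵀD) W3)
  have hKW1K : K * W1 * Kᵀ = W2ᵀ * W1⁻¹ * W2 := by
    rw [hKW1, hK, Matrix.transpose_mul, hW1inv_symm, Matrix.transpose_transpose,
      Matrix.mul_assoc]
  have hSchur : (W3 - W2ᵀ * W1⁻¹ * W2).PosSemidef := by
    have := (Matrix.PosDef.fromBlocks₁₁ W2 W3 hW1).mp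
    rw [Matrix.conjTranspose_eq_transpose_of_trivial] at this
    exact this hW
  have htr2 : (Kᵀ * (Dᵀ * D) * K * W1).trace = ((Dᵀ * D) * (K * W1 * Kᵀ)).trace := by
    rw [Matrix.mul_assoc (Kᵀ * (Dᵀ * D)) K W1, Matrix.mul_assoc Kᵀ (Dᵀ * D) (K * W1),
      Matrix.trace_mul_comm Kᵀ ((Dᵀ * D) * (K * W1)), Matrix.mul_assoc,
      Matrix.mul_assoc]
  have hstep2 : (Kᵀ * (Dᵀ * D) * K * W1).trace ≤ ((Dᵀ * D) * W3).trace := by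
    rw [htr2, hKW1K]
    have hpos := my_trace_mul_nonneg hD.posSemidef hSchur
    rw [Matrix.mul_sub, Matrix.trace_sub] at hpos
    linarith
  -- assemble
  have hRHS : ((Matrix.fromBlocks (Cᵀ * C) 0 0 (Dᵀ * D))
      * (Matrix.fromBlocks W1 W2 W2ᵀ W3)).trace
      = (Cᵀ * C * W1).trace + ((Dᵀ * D) * W3).trace := by
    rw [Matrix.fromBlocks_multiply]
    simp only [Matrix.zero_mul, Matrix.mul_zero, add_zero, zero_add]
    rw [my_trace_fromBlocks]
  have hXW1 : (X * W1).trace = (Cᵀ * C * W1).trace + (Kᵀ * (Dᵀ * D) * K * W1).trace := by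
    rw [hX, Matrix.add_mul, Matrix.trace_add]
  calc (X * Wc i).trace ≤ (X * W1).trace := hstep1
    _ = (Cᵀ * C * W1).trace + (Kᵀ * (Dᵀ * D) * K * W1).trace := hXW1
    _ ≤ (Cᵀ * C * W1).trace + ((Dᵀ * D) * W3).trace := by linarith
    _ = _ := hRHS.symm
end

section
/- In the PALM setting, if 2τ ≥ β, then for every n ≥ 1 the iterates satisfy the sufficient-decrease inequality Ψ_{n+1} + C₂‖W̃_{n+1} − W̃_n‖² + C₃‖P̃_{n+1} − P̃_n‖² + C₄‖u_{n+1} − u_n‖² ≤ Ψ_n (an inequality in ℝ ∪ {+∞}). -/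
open Matrix

noncomputable section

/-! ## The PALM setting for the group-sparse feedback LQ problem

Row groups of the feedback gain are indexed by `Fin s` with sizes `mi i` (so `m = ∑ mi i`),
column groups by `Fin t` with sizes `nj j` (so `n = ∑ nj j`).  We realize the index set
`{1,…,m}` as the sigma type `Jm = Σ i, Fin (mi i)` and similarly `Jn`, and the index set of
size `p = n + m` as `Jp = Jn ⊕ Jm` (states first, then inputs).  Vectors in `ℝ^{p²}` are
functions `Jp × Jp → ℝ` (the vectorization of a `p × p` matrix), and vectors in `ℝ^{mn}`
are functions `Jm × Jn → ℝ`. -/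

/-- Row index set `{1,…,m}` partitioned into `s` groups. -/
abbrev Jm (s : ℕ) (mi : Fin s → ℕ) : Type := (i : Fin s) × Fin (mi i)

/-- Column index set `{1,…,n}` partitioned into `t` groups. -/
abbrev Jn (t : ℕ) (nj : Fin t → ℕ) : Type := (j : Fin t) × Fin (nj j)

/-- Index set of size `p = n + m`. -/
abbrev Jp (s t : ℕ) (mi : Fin s → ℕ) (nj : Fin t → ℕ) : Type := Jn t nj ⊕ Jm s mi

/-- Row index set of the constraint matrices `𝒜` and `ℬ` (size `N* + mn`). -/
abbrev JA (s t Nstar : ℕ) (mi : Fin s → ℕ) (nj : Fin t → ℕ) : Type :=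
  Fin Nstar ⊕ (Jm s mi × Jn t nj)

/-- The constraint matrix `ℬ = [0; −I_{mn}]`. -/
def Bmat (s t Nstar : ℕ) (mi : Fin s → ℕ) (nj : Fin t → ℕ) :
    Matrix (JA s t Nstar mi nj) (Jm s mi × Jn t nj) ℝ :=
  Matrix.fromRows 0 (-1)

/-- `vec⁻¹`: reinterpret a vector in `ℝ^{p²}` as a `p × p` matrix. -/
def toMat (s t : ℕ) (mi : Fin s → ℕ) (nj : Fin t → ℕ)
    (x : Jp s t mi nj × Jp s t mi nj → ℝ) : Matrix (Jp s t mi nj) (Jp s t mi nj) ℝ :=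
  Matrix.of fun i j => x (i, j)

/-- The cost matrix `R = blockdiag(CᵀC, DᵀD)`. -/
def Rmat (s t qd : ℕ) (mi : Fin s → ℕ) (nj : Fin t → ℕ)
    (Csys : Matrix (Fin qd) (Jn t nj) ℝ) (Dsys : Matrix (Fin qd) (Jm s mi) ℝ) :
    Matrix (Jp s t mi nj) (Jp s t mi nj) ℝ :=
  Matrix.fromBlocks (Csysᵀ * Csys) 0 0 (Dsysᵀ * Dsys)

/-- The linear part `⟨vec R, ·⟩` of the function `f`. -/
def flin (s t qd : ℕ) (mi : Fin s → ℕ) (nj : Fin t → ℕ)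
    (Csys : Matrix (Fin qd) (Jn t nj) ℝ) (Dsys : Matrix (Fin qd) (Jm s mi) ℝ)
    (x : Jp s t mi nj × Jp s t mi nj → ℝ) : ℝ :=
  (fun ij : Jp s t mi nj × Jp s t mi nj => Rmat s t qd mi nj Csys Dsys ij.1 ij.2) ⬝ᵥ x

/-- The affine matrix map `Ψ_i(W) = −V₂(F_iW + WF_iᵀ + Q)V₂ᵀ`
`= −(A_iW₁₁ + W₁₁A_iᵀ + B_{2,i}W₂₁ + W₁₂B_{2,i}ᵀ + B₁B₁ᵀ)`. -/
def PsiMat (s t M l : ℕ) (mi : Fin s → ℕ) (nj : Fin t → ℕ)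
    (Asys : Fin M → Matrix (Jn t nj) (Jn t nj) ℝ)
    (B2sys : Fin M → Matrix (Jn t nj) (Jm s mi) ℝ)
    (B1sys : Matrix (Jn t nj) (Fin l) ℝ)
    (i : Fin M) (Wm : Matrix (Jp s t mi nj) (Jp s t mi nj) ℝ) :
    Matrix (Jn t nj) (Jn t nj) ℝ :=
  -(Asys i * Wm.toBlocks₁₁ + Wm.toBlocks₁₁ * (Asys i)ᵀ + B2sys i * Wm.toBlocks₂₁
    + Wm.toBlocks₁₂ * (B2sys i)ᵀ + B1sys * B1sysᵀ)

/-- The effective domain of `f`: the set on which all the indicator terms of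
`f(W̃) = ⟨vec R, W̃⟩ + δ_{Γ₊^p}(W̃) + ∑ᵢ δ_{Γ₊^n}(vec Ψᵢ)` vanish. -/
def fdom (s t M l : ℕ) (mi : Fin s → ℕ) (nj : Fin t → ℕ)
    (Asys : Fin M → Matrix (Jn t nj) (Jn t nj) ℝ)
    (B2sys : Fin M → Matrix (Jn t nj) (Jm s mi) ℝ)
    (B1sys : Matrix (Jn t nj) (Fin l) ℝ) :
    Set (Jp s t mi nj × Jp s t mi nj → ℝ) :=
  {x | (toMat s t mi nj x).PosSemidef ∧
    ∀ i, (PsiMat s t M l mi nj Asys B2sys B1sys i (toMat s t mi nj x)).PosSemidef}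

/-- The group `ℓ₀`-penalty `g(P̃) = γ‖vec⁻¹(P̃)‖_{s,t;0}` (γ times the number of nonzero
blocks). -/
def gfun (s t : ℕ) (mi : Fin s → ℕ) (nj : Fin t → ℕ) (γ : ℝ)
    (P : Jm s mi × Jn t nj → ℝ) : ℝ :=
  γ * (Nat.card {ℓ : Fin s × Fin t |
    ∃ (a : Fin (mi ℓ.1)) (b : Fin (nj ℓ.2)), P (⟨ℓ.1, a⟩, ⟨ℓ.2, b⟩) ≠ 0} : ℝ)

/-- The quadratic penalty `H(W̃, P̃) = (ρ/2)‖𝒜W̃ + ℬP̃‖²`. -/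
def Hpen (s t Nstar : ℕ) (mi : Fin s → ℕ) (nj : Fin t → ℕ)
    (Amat : Matrix (JA s t Nstar mi nj) (Jp s t mi nj × Jp s t mi nj) ℝ) (ρ : ℝ)
    (Wt : Jp s t mi nj × Jp s t mi nj → ℝ) (Pt : Jm s mi × Jn t nj → ℝ) : ℝ :=
  (ρ/2) * ((Amat *ᵥ Wt + Bmat s t Nstar mi nj *ᵥ Pt)
    ⬝ᵥ (Amat *ᵥ Wt + Bmat s t Nstar mi nj *ᵥ Pt))

/-- The spectral norm of a real matrix. -/
def spectralNorm' {α β : Type*} [Fintype α] [Fintype β] [DecidableEq β]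
    (A : Matrix α β ℝ) : ℝ :=
  ‖LinearMap.toContinuousLinearMap (Matrix.toEuclideanLin A)‖

/-- Euclidean norm `‖v‖ = √(v ⬝ᵥ v)`. -/
def enorm' {ι : Type*} [Fintype ι] (v : ι → ℝ) : ℝ :=
  Real.sqrt (v ⬝ᵥ v)

/-- `κ₁ = ρ‖𝒜ᵀ𝒜‖`. -/
def kap1 (s t Nstar : ℕ) (mi : Fin s → ℕ) (nj : Fin t → ℕ)
    (Amat : Matrix (JA s t Nstar mi nj) (Jp s t mi nj × Jp s t mi nj) ℝ) (ρ : ℝ) : ℝ :=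
  ρ * spectralNorm' (Amatᵀ * Amat)

/-- `κ₂ = ρ‖ℬᵀℬ‖`. -/
def kap2 (s t Nstar : ℕ) (mi : Fin s → ℕ) (nj : Fin t → ℕ) (ρ : ℝ) : ℝ :=
  ρ * spectralNorm' ((Bmat s t Nstar mi nj)ᵀ * Bmat s t Nstar mi nj)

/-- `κ₃ = ρ‖𝒜ᵀℬ‖`. -/
def kap3 (s t Nstar : ℕ) (mi : Fin s → ℕ) (nj : Fin t → ℕ)
    (Amat : Matrix (JA s t Nstar mi nj) (Jp s t mi nj × Jp s t mi nj) ℝ) (ρ : ℝ) : ℝ :=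
  ρ * spectralNorm' (Amatᵀ * Bmat s t Nstar mi nj)

/-- The regularized augmented Lagrangian `Ψ`. -/
def PsiLag (s t Nstar qd : ℕ) (mi : Fin s → ℕ) (nj : Fin t → ℕ)
    (Csys : Matrix (Fin qd) (Jn t nj) ℝ) (Dsys : Matrix (Fin qd) (Jm s mi) ℝ)
    (Amat : Matrix (JA s t Nstar mi nj) (Jp s t mi nj × Jp s t mi nj) ℝ)
    (γ ρ β τ σ : ℝ)
    (Wt : Jp s t mi nj × Jp s t mi nj → ℝ) (Pt : Jm s mi × Jn t nj → ℝ)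
    (z u Wt' u' : Jp s t mi nj × Jp s t mi nj → ℝ) : ℝ :=
  flin s t qd mi nj Csys Dsys z + gfun s t mi nj γ Pt
    + Hpen s t Nstar mi nj Amat ρ Wt Pt
    + u ⬝ᵥ (Wt - z) + (β/2) * ((Wt - z) ⬝ᵥ (Wt - z))
    + (4*(1-σ)/(σ^2*β)) * (((u - u') + (σ*(τ-β)) • (Wt - Wt'))
        ⬝ᵥ ((u - u') + (σ*(τ-β)) • (Wt - Wt')))
    + (8*(σ*τ + kap1 s t Nstar mi nj Amat ρ)^2/(σ*β)) * ((Wt - Wt') ⬝ᵥ (Wt - Wt'))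

/-- The descent constant `C₂`. -/
def C2const (s t Nstar : ℕ) (mi : Fin s → ℕ) (nj : Fin t → ℕ)
    (Amat : Matrix (JA s t Nstar mi nj) (Jp s t mi nj × Jp s t mi nj) ℝ)
    (ρ β τ σ : ℝ) : ℝ :=
  τ - (kap1 s t Nstar mi nj Amat ρ + β)/2 - 4*σ*τ^2/β
    - 8*(σ*τ + kap1 s t Nstar mi nj Amat ρ)^2/(σ*β)

/-- The descent constant `C₃`. -/
def C3const (s t Nstar : ℕ) (mi : Fin s → ℕ) (nj : Fin t → ℕ)
    (Amat : Matrix (JA s t Nstar mi nj) (Jp s t mi nj × Jp s t mi nj) ℝ)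
    (ρ μ β σ : ℝ) : ℝ :=
  (μ - kap2 s t Nstar mi nj ρ)/2 - 8*(kap3 s t Nstar mi nj Amat ρ)^2/(σ*β)

/-- The descent constant `C₄`. -/
def C4const (β σ : ℝ) : ℝ := 1/(σ*β)

/-- The PALM iteration (31): the sequences `(W̃_n, P̃_n, z_n, u_n)` satisfy the four update
rules (the `P̃`- and `z`-updates being characterized as global minimizers of their
respective proximal subproblems). -/
def PALMIter (s t Nstar M l qd : ℕ) (mi : Fin s → ℕ) (nj : Fin t → ℕ)
    (Csys : Matrix (Fin qd) (Jn t nj) ℝ) (Dsys : Matrix (Fin qd) (Jm s mi) ℝ)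
    (Asys : Fin M → Matrix (Jn t nj) (Jn t nj) ℝ)
    (B2sys : Fin M → Matrix (Jn t nj) (Jm s mi) ℝ)
    (B1sys : Matrix (Jn t nj) (Fin l) ℝ)
    (Amat : Matrix (JA s t Nstar mi nj) (Jp s t mi nj × Jp s t mi nj) ℝ)
    (γ ρ μ β τ σ : ℝ)
    (Wseq : ℕ → Jp s t mi nj × Jp s t mi nj → ℝ)
    (Pseq : ℕ → Jm s mi × Jn t nj → ℝ)
    (zseq : ℕ → Jp s t mi nj × Jp s t mi nj → ℝ)
    (useq : ℕ → Jp s t mi nj × Jp s t mi nj → ℝ) : Prop :=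
  (∀ nn : ℕ,
    let v : Jm s mi × Jn t nj → ℝ :=
      Pseq nn - μ⁻¹ • (ρ • ((Bmat s t Nstar mi nj)ᵀ
        *ᵥ (Amat *ᵥ Wseq nn + Bmat s t Nstar mi nj *ᵥ Pseq nn)))
    ∀ Pv : Jm s mi × Jn t nj → ℝ,
      gfun s t mi nj γ (Pseq (nn+1))
          + (μ/2) * ((Pseq (nn+1) - v) ⬝ᵥ (Pseq (nn+1) - v))
        ≤ gfun s t mi nj γ Pv + (μ/2) * ((Pv - v) ⬝ᵥ (Pv - v))) ∧
  (∀ nn : ℕ,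
    let ξ : Jp s t mi nj × Jp s t mi nj → ℝ := Wseq nn + β⁻¹ • useq nn
    zseq (nn+1) ∈ fdom s t M l mi nj Asys B2sys B1sys ∧
      ∀ y ∈ fdom s t M l mi nj Asys B2sys B1sys,
        flin s t qd mi nj Csys Dsys (zseq (nn+1))
            + (β/2) * ((zseq (nn+1) - ξ) ⬝ᵥ (zseq (nn+1) - ξ))
          ≤ flin s t qd mi nj Csys Dsys y + (β/2) * ((y - ξ) ⬝ᵥ (y - ξ))) ∧
  (∀ nn : ℕ,
    Wseq (nn+1) = Wseq nn - τ⁻¹ •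
      (ρ • (Amatᵀ *ᵥ (Amat *ᵥ Wseq nn + Bmat s t Nstar mi nj *ᵥ Pseq (nn+1)))
        + useq nn + β • (Wseq nn - zseq (nn+1)))) ∧
  (∀ nn : ℕ, useq (nn+1) = useq nn + (σ*β) • (Wseq (nn+1) - zseq (nn+1)))

/-- The parameter selection criterion (30). -/
def Crit (s t Nstar : ℕ) (mi : Fin s → ℕ) (nj : Fin t → ℕ)
    (Amat : Matrix (JA s t Nstar mi nj) (Jp s t mi nj × Jp s t mi nj) ℝ)
    (ρ μ β τ σ : ℝ) : Prop :=
  0 < σ ∧ σ < 1/24 ∧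
  0 < 1 - 32*(kap1 s t Nstar mi nj Amat ρ)/β - 128*(kap1 s t Nstar mi nj Amat ρ)^2/β^2
      - 24*(kap1 s t Nstar mi nj Amat ρ)*σ/β - 24*σ ∧
  β > (4*(kap1 s t Nstar mi nj Amat ρ)/(1-24*σ))
      * (4 + 3*σ + Real.sqrt (24 - 168*σ + 9*σ^2)) ∧
  μ > kap2 s t Nstar mi nj ρ + 16*(kap3 s t Nstar mi nj Amat ρ)^2/(σ*β) ∧
  max (β/2) ((β/(24*σ)) * (1 - 16*(kap1 s t Nstar mi nj Amat ρ)/β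
      - Real.sqrt (1 - 32*(kap1 s t Nstar mi nj Amat ρ)/β
          - 128*(kap1 s t Nstar mi nj Amat ρ)^2/β^2
          - 24*(kap1 s t Nstar mi nj Amat ρ)*σ/β - 24*σ))) < τ ∧
  τ < (β/(24*σ)) * (1 - 16*(kap1 s t Nstar mi nj Amat ρ)/β
      + Real.sqrt (1 - 32*(kap1 s t Nstar mi nj Amat ρ)/β
          - 128*(kap1 s t Nstar mi nj Amat ρ)^2/β^2
          - 24*(kap1 s t Nstar mi nj Amat ρ)*σ/β - 24*σ))

/-! ### Auxiliary lemmas for the proof -/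

set_option maxHeartbeats 1600000

section helpers
variable {n : Type*} [Fintype n]

lemma dot_self_nn (x : n → ℝ) : 0 ≤ x ⬝ᵥ x :=
  Finset.sum_nonneg fun i _ => mul_self_nonneg (x i)

lemma dsq_add (x y : n → ℝ) : (x + y) ⬝ᵥ (x + y) = x ⬝ᵥ x + 2*(x ⬝ᵥ y) + y ⬝ᵥ y := by
  rw [dotProduct_add, add_dotProduct, add_dotProduct, dotProduct_comm y x]; ring

lemma dsq_sub (x y : n → ℝ) : (x - y) ⬝ᵥ (x - y) = x ⬝ᵥ x - 2*(x ⬝ᵥ y) + y ⬝ᵥ y := by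
  rw [dotProduct_sub, sub_dotProduct, sub_dotProduct, dotProduct_comm y x]; ring

lemma dsmul (c : ℝ) (x : n → ℝ) : (c • x) ⬝ᵥ (c • x) = c^2*(x ⬝ᵥ x) := by
  rw [smul_dotProduct, dotProduct_smul, smul_eq_mul, smul_eq_mul]; ring

lemma dsq_sub_le (x y : n → ℝ) : (x - y) ⬝ᵥ (x - y) ≤ 2*(x ⬝ᵥ x) + 2*(y ⬝ᵥ y) := by
  have h := dot_self_nn (x + y)
  rw [dsq_add] at h
  rw [dsq_sub]
  linarith

lemma dCS (x y : n → ℝ) : (x ⬝ᵥ y)^2 ≤ (x ⬝ᵥ x)*(y ⬝ᵥ y) := by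
  have h := Finset.sum_mul_sq_le_sq_mul_sq Finset.univ x y
  simp only [dotProduct]
  calc (∑ i, x i * y i)^2 ≤ (∑ i, x i ^2) * (∑ i, y i ^2) := h
    _ = (∑ i, x i * x i) * (∑ i, y i * y i) := by simp [sq]

end helpers

lemma sc_le {x B : ℝ} (h : x^2 ≤ B^2) (hB : 0 ≤ B) : x ≤ B := by nlinarith
lemma sc_ge {x B : ℝ} (h : x^2 ≤ B^2) (hB : 0 ≤ B) : -B ≤ x := by nlinarith
lemma sc_prod {x B y C : ℝ} (h1 : x ≤ B) (h2 : -B ≤ x) (h3 : y ≤ C) (h4 : -C ≤ y) :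
    -(y*x) ≤ C*B := by nlinarith

lemma dot_adj {α β : Type*} [Fintype α] [Fintype β] (A : Matrix α β ℝ)
    (x : β → ℝ) (y : α → ℝ) : x ⬝ᵥ (Aᵀ *ᵥ y) = (A *ᵥ x) ⬝ᵥ y := by
  rw [Matrix.dotProduct_mulVec, Matrix.vecMul_transpose, dotProduct_comm,
    Matrix.dotProduct_mulVec, dotProduct_comm]

lemma enorm_mulVec_le {α β : Type*} [Fintype α] [Fintype β] [DecidableEq β]
    (A : Matrix α β ℝ) (x : β → ℝ) :
    (A *ᵥ x) ⬝ᵥ (A *ᵥ x) ≤ spectralNorm' A ^ 2 * (x ⬝ᵥ x) := by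
  set x' : EuclideanSpace ℝ β := (WithLp.equiv 2 (β → ℝ)).symm x with hx'
  have h1 : Matrix.toEuclideanLin A x' = (WithLp.equiv 2 (α → ℝ)).symm (A *ᵥ x) := by
    rw [Matrix.toEuclideanLin_apply]; simp [hx']
  have h2 : ‖Matrix.toEuclideanLin A x'‖ ≤ spectralNorm' A * ‖x'‖ := by
    simpa only [LinearMap.coe_toContinuousLinearMap', spectralNorm'] using
      (LinearMap.toContinuousLinearMap (Matrix.toEuclideanLin A)).le_opNorm x'
  have hdx : (x ⬝ᵥ x) = ‖x'‖ ^ 2 := by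
    rw [← real_inner_self_eq_norm_sq]
    simp [hx', dotProduct, PiLp.inner_apply, RCLike.inner_apply]
    rw [EuclideanSpace.norm_eq, Real.sq_sqrt (Finset.sum_nonneg fun i _ => sq_nonneg _)]
    simp [sq]
  have hdA : (A *ᵥ x) ⬝ᵥ (A *ᵥ x) = ‖Matrix.toEuclideanLin A x'‖ ^ 2 := by
    rw [h1, ← real_inner_self_eq_norm_sq]
    simp [dotProduct, PiLp.inner_apply, RCLike.inner_apply]
    rw [EuclideanSpace.norm_eq, Real.sq_sqrt (Finset.sum_nonneg fun i _ => sq_nonneg _)]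
    simp [sq]
  rw [hdx, hdA]
  calc ‖Matrix.toEuclideanLin A x'‖ ^ 2 ≤ (spectralNorm' A * ‖x'‖)^2 := by
        apply pow_le_pow_left₀ (norm_nonneg _) h2
    _ = spectralNorm' A ^ 2 * ‖x'‖ ^ 2 := by ring

lemma dot_gram_le {α β : Type*} [Fintype α] [Fintype β] [DecidableEq β]
    (A : Matrix α β ℝ) (x : β → ℝ) :
    (A *ᵥ x) ⬝ᵥ (A *ᵥ x) ≤ spectralNorm' (Aᵀ * A) * (x ⬝ᵥ x) := by
  have key : (A *ᵥ x) ⬝ᵥ (A *ᵥ x) = x ⬝ᵥ ((Aᵀ * A) *ᵥ x) := by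
    rw [← Matrix.mulVec_mulVec, dot_adj, dotProduct_comm]
  rw [key]
  set x' : EuclideanSpace ℝ β := (WithLp.equiv 2 (β → ℝ)).symm x with hx'
  set M := Aᵀ * A
  have h1 : Matrix.toEuclideanLin M x' = (WithLp.equiv 2 (β → ℝ)).symm (M *ᵥ x) := by
    rw [Matrix.toEuclideanLin_apply]; simp [hx']
  have h2 : ‖Matrix.toEuclideanLin M x'‖ ≤ spectralNorm' M * ‖x'‖ := by
    simpa only [LinearMap.coe_toContinuousLinearMap', spectralNorm'] using
      (LinearMap.toContinuousLinearMap (Matrix.toEuclideanLin M)).le_opNorm x'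
  have hinner : x ⬝ᵥ (M *ᵥ x) = inner ℝ x' (Matrix.toEuclideanLin M x') := by
    rw [h1]; simp [hx', dotProduct, PiLp.inner_apply, RCLike.inner_apply, mul_comm]
  have hxn : ‖x'‖^2 = x ⬝ᵥ x := by
    rw [← real_inner_self_eq_norm_sq]
    simp [hx', dotProduct, PiLp.inner_apply, RCLike.inner_apply]
    rw [EuclideanSpace.norm_eq, Real.sq_sqrt (Finset.sum_nonneg fun i _ => sq_nonneg _)]
    simp [sq]
  rw [hinner]
  calc (inner ℝ x' (Matrix.toEuclideanLin M x') : ℝ)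
      ≤ ‖x'‖ * ‖Matrix.toEuclideanLin M x'‖ := real_inner_le_norm _ _
    _ ≤ ‖x'‖ * (spectralNorm' M * ‖x'‖) := by
        apply mul_le_mul_of_nonneg_left h2 (norm_nonneg _)
    _ = spectralNorm' M * (x ⬝ᵥ x) := by rw [← hxn]; ring

/-- Abstract core of Lemma 4.1. -/
lemma PALM_core {ι π κo : Type*} [Fintype ι] [Fintype π] [Fintype κo]
    [DecidableEq ι] [DecidableEq π]
    (A : Matrix κo ι ℝ) (Bm : Matrix κo π ℝ)
    (ρ μ β τ σ : ℝ) (hρ : 0 < ρ) (hμ : 0 < μ) (hβ : 0 < β) (hτ : 0 < τ)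
    (hσ0 : 0 < σ) (hσ1 : σ ≤ 1) (h2τ : β ≤ 2*τ)
    (κ₁ κ₂ κ₃ : ℝ)
    (hκ₁ : κ₁ = ρ * spectralNorm' (Aᵀ * A))
    (hκ₂ : κ₂ = ρ * spectralNorm' (Bmᵀ * Bm))
    (hκ₃ : κ₃ = ρ * spectralNorm' (Aᵀ * Bm))
    (W0 W1 W2 z1 z2 u0 u1 u2 : ι → ℝ) (P1 P2 : π → ℝ)
    (fl1 fl2 g1 g2 : ℝ)
    (hprox : g2 + (μ/2) * ((P2 - (P1 - μ⁻¹ • (ρ • (Bmᵀ *ᵥ (A *ᵥ W1 + Bm *ᵥ P1)))))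
        ⬝ᵥ (P2 - (P1 - μ⁻¹ • (ρ • (Bmᵀ *ᵥ (A *ᵥ W1 + Bm *ᵥ P1))))))
      ≤ g1 + (μ/2) * ((P1 - (P1 - μ⁻¹ • (ρ • (Bmᵀ *ᵥ (A *ᵥ W1 + Bm *ᵥ P1)))))
        ⬝ᵥ (P1 - (P1 - μ⁻¹ • (ρ • (Bmᵀ *ᵥ (A *ᵥ W1 + Bm *ᵥ P1)))))))
    (hzmin : fl2 + (β/2) * ((z2 - (W1 + β⁻¹ • u1)) ⬝ᵥ (z2 - (W1 + β⁻¹ • u1)))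
      ≤ fl1 + (β/2) * ((z1 - (W1 + β⁻¹ • u1)) ⬝ᵥ (z1 - (W1 + β⁻¹ • u1))))
    (hW1 : W1 = W0 - τ⁻¹ • (ρ • (Aᵀ *ᵥ (A *ᵥ W0 + Bm *ᵥ P1)) + u0 + β • (W0 - z1)))
    (hW2 : W2 = W1 - τ⁻¹ • (ρ • (Aᵀ *ᵥ (A *ᵥ W1 + Bm *ᵥ P2)) + u1 + β • (W1 - z2)))
    (hu1 : u1 = u0 + (σ*β) • (W1 - z1))
    (hu2 : u2 = u1 + (σ*β) • (W2 - z2)) :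
    fl2 + g2 + (ρ/2) * ((A *ᵥ W2 + Bm *ᵥ P2) ⬝ᵥ (A *ᵥ W2 + Bm *ᵥ P2))
      + u2 ⬝ᵥ (W2 - z2) + (β/2) * ((W2 - z2) ⬝ᵥ (W2 - z2))
      + (4*(1-σ)/(σ^2*β)) * (((u2 - u1) + (σ*(τ-β)) • (W2 - W1))
          ⬝ᵥ ((u2 - u1) + (σ*(τ-β)) • (W2 - W1)))
      + (8*(σ*τ + κ₁)^2/(σ*β)) * ((W2 - W1) ⬝ᵥ (W2 - W1))
      + (τ - (κ₁ + β)/2 - 4*σ*τ^2/β - 8*(σ*τ + κ₁)^2/(σ*β)) * ((W2 - W1) ⬝ᵥ (W2 - W1))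
      + ((μ - κ₂)/2 - 8*κ₃^2/(σ*β)) * ((P2 - P1) ⬝ᵥ (P2 - P1))
      + (1/(σ*β)) * ((u2 - u1) ⬝ᵥ (u2 - u1))
    ≤ fl1 + g1 + (ρ/2) * ((A *ᵥ W1 + Bm *ᵥ P1) ⬝ᵥ (A *ᵥ W1 + Bm *ᵥ P1))
      + u1 ⬝ᵥ (W1 - z1) + (β/2) * ((W1 - z1) ⬝ᵥ (W1 - z1))
      + (4*(1-σ)/(σ^2*β)) * (((u1 - u0) + (σ*(τ-β)) • (W1 - W0))
          ⬝ᵥ ((u1 - u0) + (σ*(τ-β)) • (W1 - W0)))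
      + (8*(σ*τ + κ₁)^2/(σ*β)) * ((W1 - W0) ⬝ᵥ (W1 - W0)) := by
  have hσβ : (0:ℝ) < σ*β := mul_pos hσ0 hβ
  have hτne : τ ≠ 0 := hτ.ne'
  have hβne : β ≠ 0 := hβ.ne'
  have hμne : μ ≠ 0 := hμ.ne'
  have hσne : σ ≠ 0 := hσ0.ne'
  set dW := W2 - W1 with hdW
  set dP := P2 - P1 with hdP
  set du := u2 - u1 with hdu
  set dWm := W1 - W0 with hdWm
  set dum := u1 - u0 with hdum
  set q1 := A *ᵥ W1 + Bm *ᵥ P1 with hq1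
  set q2 := A *ᵥ W2 + Bm *ᵥ P2 with hq2
  set q12 := A *ᵥ W1 + Bm *ᵥ P2 with hq12
  set q01 := A *ᵥ W0 + Bm *ᵥ P1 with hq01
  set gp := ρ • (Bmᵀ *ᵥ q1) with hgp
  set G1 := ρ • (Aᵀ *ᵥ q12) with hG1
  set G0 := ρ • (Aᵀ *ᵥ q01) with hG0
  set e2 := du + (σ*(τ-β)) • dW with he2
  set e1 := dum + (σ*(τ-β)) • dWm with he1
  set M1 := Aᵀ * A with hM1
  set M2 := Aᵀ * Bm with hM2
  set S1 := spectralNorm' M1 with hS1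
  set S2 := spectralNorm' M2 with hS2
  -- ### P-step
  have hexp1 : (μ/2) * ((P2 - (P1 - μ⁻¹ • gp)) ⬝ᵥ (P2 - (P1 - μ⁻¹ • gp)))
      = (μ/2)*(dP ⬝ᵥ dP) + dP ⬝ᵥ gp
        + (μ/2) * ((P1 - (P1 - μ⁻¹ • gp)) ⬝ᵥ (P1 - (P1 - μ⁻¹ • gp))) := by
    rw [sub_sub_cancel, show P2 - (P1 - μ⁻¹ • gp) = dP + μ⁻¹ • gp from by rw [hdP]; abel,
      dsq_add, dsmul, dotProduct_smul, smul_eq_mul]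
    field_simp
  have hprox' : g2 + (μ/2)*(dP ⬝ᵥ dP) + dP ⬝ᵥ gp ≤ g1 := by
    rw [hexp1] at hprox; linarith
  have hq12e : q12 = q1 + Bm *ᵥ dP := by
    rw [hq12, hq1, hdP, Matrix.mulVec_sub]; abel
  have hH12 : (ρ/2)*(q12 ⬝ᵥ q12)
      = (ρ/2)*(q1 ⬝ᵥ q1) + dP ⬝ᵥ gp + (ρ/2)*((Bm *ᵥ dP) ⬝ᵥ (Bm *ᵥ dP)) := by
    rw [hq12e, dsq_add, hgp, dotProduct_smul, smul_eq_mul, dot_adj,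
      dotProduct_comm (Bm *ᵥ dP) q1]
    ring
  have hBd : ρ*((Bm *ᵥ dP) ⬝ᵥ (Bm *ᵥ dP)) ≤ κ₂*(dP ⬝ᵥ dP) := by
    calc ρ*((Bm *ᵥ dP) ⬝ᵥ (Bm *ᵥ dP)) ≤ ρ*(spectralNorm' (Bmᵀ * Bm)*(dP ⬝ᵥ dP)) :=
          mul_le_mul_of_nonneg_left (dot_gram_le Bm dP) hρ.le
      _ = κ₂*(dP ⬝ᵥ dP) := by rw [hκ₂]; ring
  have F1 : g2 + (ρ/2)*(q12 ⬝ᵥ q12) + ((μ - κ₂)/2)*(dP ⬝ᵥ dP)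
      ≤ g1 + (ρ/2)*(q1 ⬝ᵥ q1) := by linarith
  -- ### z-step
  have hzkey : ∀ z : ι → ℝ,
      (β/2) * ((z - (W1 + β⁻¹ • u1)) ⬝ᵥ (z - (W1 + β⁻¹ • u1)))
      = (β/2)*((W1 - z) ⬝ᵥ (W1 - z)) + u1 ⬝ᵥ (W1 - z) + (1/(2*β))*(u1 ⬝ᵥ u1) := by
    intro z
    rw [show z - (W1 + β⁻¹ • u1) = -((W1 - z) + β⁻¹ • u1) from by module,
      neg_dotProduct, dotProduct_neg, neg_neg, dsq_add, dsmul,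
      dotProduct_smul, smul_eq_mul, dotProduct_comm (W1 - z) u1]
    field_simp
  have F2 : fl2 + u1 ⬝ᵥ (W1 - z2) + (β/2)*((W1 - z2) ⬝ᵥ (W1 - z2))
      ≤ fl1 + u1 ⬝ᵥ (W1 - z1) + (β/2)*((W1 - z1) ⬝ᵥ (W1 - z1)) := by
    rw [hzkey z2, hzkey z1] at hzmin; linarith
  -- ### W-step
  have hq2e : q2 = q12 + A *ᵥ dW := by
    rw [hq2, hq12, hdW, Matrix.mulVec_sub]; abel
  have hTW : τ • (W1 - W2) = G1 + u1 + β • (W1 - z2) := by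
    rw [hW2, sub_sub_cancel, smul_smul, mul_inv_cancel₀ hτne, one_smul]
  have hdot3 : G1 ⬝ᵥ dW + u1 ⬝ᵥ dW + β*((W1 - z2) ⬝ᵥ dW) = -(τ*(dW ⬝ᵥ dW)) := by
    have h1 : (τ • (W1 - W2)) ⬝ᵥ dW = (G1 + u1 + β • (W1 - z2)) ⬝ᵥ dW := by rw [hTW]
    have h2 : (τ • (W1 - W2)) ⬝ᵥ dW = -(τ*(dW ⬝ᵥ dW)) := by
      rw [show W1 - W2 = -dW from by rw [hdW]; abel, smul_neg, neg_dotProduct,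
        smul_dotProduct, smul_eq_mul]
    have h3 : (G1 + u1 + β • (W1 - z2)) ⬝ᵥ dW
        = G1 ⬝ᵥ dW + u1 ⬝ᵥ dW + β*((W1 - z2) ⬝ᵥ dW) := by
      simp only [add_dotProduct, smul_dotProduct, smul_eq_mul]
    linarith
  have hH2 : (ρ/2)*(q2 ⬝ᵥ q2)
      = (ρ/2)*(q12 ⬝ᵥ q12) + G1 ⬝ᵥ dW + (ρ/2)*((A *ᵥ dW) ⬝ᵥ (A *ᵥ dW)) := by
    rw [hq2e, dsq_add, hG1, smul_dotProduct, smul_eq_mul,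
      dotProduct_comm (Aᵀ *ᵥ q12) dW, dot_adj,
      dotProduct_comm (A *ᵥ dW) q12]
    ring
  have hAd : ρ*((A *ᵥ dW) ⬝ᵥ (A *ᵥ dW)) ≤ κ₁*(dW ⬝ᵥ dW) := by
    calc ρ*((A *ᵥ dW) ⬝ᵥ (A *ᵥ dW)) ≤ ρ*(spectralNorm' (Aᵀ * A)*(dW ⬝ᵥ dW)) :=
          mul_le_mul_of_nonneg_left (dot_gram_le A dW) hρ.le
      _ = κ₁*(dW ⬝ᵥ dW) := by rw [hκ₁]; ring
  have F3 : (ρ/2)*(q2 ⬝ᵥ q2) + u1 ⬝ᵥ (W2 - z2) + (β/2)*((W2 - z2) ⬝ᵥ (W2 - z2))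
        + (τ - (κ₁ + β)/2)*(dW ⬝ᵥ dW)
      ≤ (ρ/2)*(q12 ⬝ᵥ q12) + u1 ⬝ᵥ (W1 - z2) + (β/2)*((W1 - z2) ⬝ᵥ (W1 - z2)) := by
    have e1' : u1 ⬝ᵥ (W2 - z2) = u1 ⬝ᵥ (W1 - z2) + u1 ⬝ᵥ dW := by
      rw [show W2 - z2 = (W1 - z2) + dW from by rw [hdW]; abel, dotProduct_add]
    have e2' : (β/2)*((W2 - z2) ⬝ᵥ (W2 - z2))
        = (β/2)*((W1 - z2) ⬝ᵥ (W1 - z2)) + β*((W1 - z2) ⬝ᵥ dW) + (β/2)*(dW ⬝ᵥ dW) := by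
      rw [show W2 - z2 = (W1 - z2) + dW from by rw [hdW]; abel, dsq_add]; ring
    linarith
  -- ### u-step
  have hdu2 : du = (σ*β) • (W2 - z2) := by rw [hdu, hu2]; abel
  have F4 : σ*β*(u2 ⬝ᵥ (W2 - z2)) = σ*β*(u1 ⬝ᵥ (W2 - z2)) + du ⬝ᵥ du := by
    have h1 : du ⬝ᵥ du = σ*β*(du ⬝ᵥ (W2 - z2)) := by
      nth_rewrite 2 [hdu2]
      rw [dotProduct_smul, smul_eq_mul]
    have h2 : du ⬝ᵥ (W2 - z2) = u2 ⬝ᵥ (W2 - z2) - u1 ⬝ᵥ (W2 - z2) := by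
      rw [hdu, sub_dotProduct]
    rw [h1, h2]; ring
  -- combined Lagrangian descent, cleared form
  have hLsum : fl2 + g2 + (ρ/2)*(q2 ⬝ᵥ q2) + u1 ⬝ᵥ (W2 - z2) + (β/2)*((W2 - z2) ⬝ᵥ (W2 - z2))
        + ((μ - κ₂)/2)*(dP ⬝ᵥ dP) + (τ - (κ₁ + β)/2)*(dW ⬝ᵥ dW)
      ≤ fl1 + g1 + (ρ/2)*(q1 ⬝ᵥ q1) + u1 ⬝ᵥ (W1 - z1) + (β/2)*((W1 - z1) ⬝ᵥ (W1 - z1)) := by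
    linarith
  have h1c : σ*β*((fl2 + g2 + (ρ/2)*(q2 ⬝ᵥ q2) + u2 ⬝ᵥ (W2 - z2)
          + (β/2)*((W2 - z2) ⬝ᵥ (W2 - z2)))
        - (fl1 + g1 + (ρ/2)*(q1 ⬝ᵥ q1) + u1 ⬝ᵥ (W1 - z1)
          + (β/2)*((W1 - z1) ⬝ᵥ (W1 - z1)))
        + ((μ - κ₂)/2)*(dP ⬝ᵥ dP) + (τ - (κ₁ + β)/2)*(dW ⬝ᵥ dW)) ≤ du ⬝ᵥ du := by
    have hmul := mul_le_mul_of_nonneg_left hLsum hσβ.le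
    linarith [hmul, F4]
  -- ### dual-variable recursion
  have hTW0 : τ • (W0 - W1) = G0 + u0 + β • (W0 - z1) := by
    rw [hW1, sub_sub_cancel, smul_smul, mul_inv_cancel₀ hτne, one_smul]
  have hE1 : e1 = (-σ) • (G0 + u0) := by
    have hz1' : β • (W0 - z1) = τ • (W0 - W1) - G0 - u0 := by rw [hTW0]; abel
    rw [he1, hdum, hu1, hdWm]
    rw [show u0 + (σ*β) • (W1 - z1) - u0 = (σ*β) • (W1 - z1) from by abel]
    rw [show (σ*β) • (W1 - z1) = σ • (β • (W1 - W0)) + σ • (β • (W0 - z1)) from by module,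
      hz1']
    module
  have hE2 : e2 = (-σ) • (G1 + u1) := by
    have hz2' : β • (W1 - z2) = τ • (W1 - W2) - G1 - u1 := by rw [hTW]; abel
    rw [he2, hdu, hu2, hdW]
    rw [show u1 + (σ*β) • (W2 - z2) - u1 = (σ*β) • (W2 - z2) from by abel]
    rw [show (σ*β) • (W2 - z2) = σ • (β • (W2 - W1)) + σ • (β • (W1 - z2)) from by module,
      hz2']
    module
  have hGdiff : G1 = G0 + (ρ • (M1 *ᵥ dWm) + ρ • (M2 *ᵥ dP)) := by
    rw [hG1, hG0, hq12, hq01, hM1, hM2, hdWm, hdP]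
    simp only [← Matrix.mulVec_mulVec, Matrix.mulVec_sub, Matrix.mulVec_add]
    module
  set r := (σ^2*(τ-β)) • dWm - (σ*ρ) • (M1 *ᵥ dWm) - (σ*ρ) • (M2 *ᵥ dP) with hr
  have hu1' : u1 = u0 + (e1 - (σ*(τ-β)) • dWm) := by
    rw [he1, hdum]; abel
  have hrec : e2 = (1-σ) • e1 + r := by
    rw [hE2, hGdiff, hu1', hE1, hr]
    module
  -- F6 : σ Ep ≤ σ(1-σ) E + Nr
  have hEpexp : e2 ⬝ᵥ e2 = (1-σ)^2*(e1 ⬝ᵥ e1) + 2*((1-σ)*(e1 ⬝ᵥ r)) + r ⬝ᵥ r := by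
    rw [hrec, dsq_add, dsmul, smul_dotProduct, smul_eq_mul]
    try ring
  have hcross : 2*(σ*(e1 ⬝ᵥ r)) ≤ σ^2*(e1 ⬝ᵥ e1) + r ⬝ᵥ r := by
    have h0 := dot_self_nn (σ • e1 - r)
    rw [dsq_sub, dsmul, smul_dotProduct, smul_eq_mul] at h0
    linarith
  have F6 : σ*(e2 ⬝ᵥ e2) ≤ σ*(1-σ)*(e1 ⬝ᵥ e1) + r ⬝ᵥ r := by
    have hEσ : σ*(e2 ⬝ᵥ e2)
        = σ*((1-σ)^2*(e1 ⬝ᵥ e1) + 2*((1-σ)*(e1 ⬝ᵥ r)) + r ⬝ᵥ r) := by rw [hEpexp]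
    have hc2 := mul_le_mul_of_nonneg_left hcross (by linarith : (0:ℝ) ≤ 1-σ)
    linarith [hEσ, hc2]
  -- F7 : Nr bound
  set y1 := (σ^2*(τ-β)) • dWm - (σ*ρ) • (M1 *ᵥ dWm) with hy1
  have hr2 : r ⬝ᵥ r ≤ 2*(y1 ⬝ᵥ y1)
      + 2*(((σ*ρ) • (M2 *ᵥ dP)) ⬝ᵥ ((σ*ρ) • (M2 *ᵥ dP))) := by
    rw [hr]; exact dsq_sub_le _ _
  have hy2 : ((σ*ρ) • (M2 *ᵥ dP)) ⬝ᵥ ((σ*ρ) • (M2 *ᵥ dP))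
      = (σ*ρ)^2 * ((M2 *ᵥ dP) ⬝ᵥ (M2 *ᵥ dP)) := dsmul _ _
  have hM2b : (M2 *ᵥ dP) ⬝ᵥ (M2 *ᵥ dP) ≤ S2^2*(dP ⬝ᵥ dP) := by
    have := enorm_mulVec_le M2 dP; rw [← hS2] at this; exact this
  have hM1b : (M1 *ᵥ dWm) ⬝ᵥ (M1 *ᵥ dWm) ≤ S1^2*(dWm ⬝ᵥ dWm) := by
    have := enorm_mulVec_le M1 dWm; rw [← hS1] at this; exact this
  have hS1nn : (0:ℝ) ≤ S1 := by rw [hS1]; exact norm_nonneg _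
  have ham : (0:ℝ) ≤ dWm ⬝ᵥ dWm := dot_self_nn _
  have hX2 : (dWm ⬝ᵥ (M1 *ᵥ dWm))^2 ≤ (S1*(dWm ⬝ᵥ dWm))^2 := by
    have h := dCS dWm (M1 *ᵥ dWm)
    have m := mul_le_mul_of_nonneg_left hM1b ham
    linarith [h, m]
  have hXle := sc_le hX2 (mul_nonneg hS1nn ham)
  have hXge := sc_ge hX2 (mul_nonneg hS1nn ham)
  have hprod : -((τ-β)*(dWm ⬝ᵥ (M1 *ᵥ dWm))) ≤ τ*(S1*(dWm ⬝ᵥ dWm)) :=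
    sc_prod hXle hXge (by linarith) (by linarith)
  have hτβsq : (τ-β)^2 ≤ τ^2 := by nlinarith
  have hy1e : y1 ⬝ᵥ y1 = (σ^2*(τ-β))^2*(dWm ⬝ᵥ dWm)
      - 2*((σ^2*(τ-β))*((σ*ρ)*(dWm ⬝ᵥ (M1 *ᵥ dWm))))
      + (σ*ρ)^2*((M1 *ᵥ dWm) ⬝ᵥ (M1 *ᵥ dWm)) := by
    rw [hy1, dsq_sub, dsmul, dsmul, smul_dotProduct, dotProduct_smul, smul_eq_mul,
      smul_eq_mul]
    try ring
  have F7y1 : y1 ⬝ᵥ y1 ≤ σ^2*(σ*τ + κ₁)^2*(dWm ⬝ᵥ dWm) := by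
    rw [hκ₁]
    have m1 := mul_le_mul_of_nonneg_left hτβsq (by positivity : (0:ℝ) ≤ σ^4*(dWm ⬝ᵥ dWm))
    have m2 := mul_le_mul_of_nonneg_left hprod (by positivity : (0:ℝ) ≤ 2*σ^3*ρ)
    have m3 := mul_le_mul_of_nonneg_left hM1b (by positivity : (0:ℝ) ≤ σ^2*ρ^2)
    linarith [hy1e, m1, m2, m3]
  have F7 : r ⬝ᵥ r ≤ 2*σ^2*(σ*τ + κ₁)^2*(dWm ⬝ᵥ dWm) + 2*σ^2*κ₃^2*(dP ⬝ᵥ dP) := by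
    rw [hκ₃]
    have m4 := mul_le_mul_of_nonneg_left hM2b (by positivity : (0:ℝ) ≤ (σ*ρ)^2)
    linarith [hr2, hy2, m4, F7y1]
  -- F8
  have hduE : du = e2 - (σ*(τ-β)) • dW := by rw [he2]; abel
  have F8 : du ⬝ᵥ du ≤ 2*(e2 ⬝ᵥ e2) + 2*(σ*(τ-β))^2*(dW ⬝ᵥ dW) := by
    rw [hduE]
    have h := dsq_sub_le e2 ((σ*(τ-β)) • dW)
    rw [dsmul] at h
    linarith
  have F8' : du ⬝ᵥ du ≤ 2*(e2 ⬝ᵥ e2) + 2*σ^2*τ^2*(dW ⬝ᵥ dW) := by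
    have hann : (0:ℝ) ≤ dW ⬝ᵥ dW := dot_self_nn _
    linarith [F8, mul_le_mul_of_nonneg_left hτβsq (by positivity : (0:ℝ) ≤ 2*σ^2*(dW ⬝ᵥ dW))]
  -- ### final assembly
  set na := dW ⬝ᵥ dW with hna
  set nb := dP ⬝ᵥ dP with hnb
  set nc := du ⬝ᵥ du with hnc
  set nam := dWm ⬝ᵥ dWm with hnam
  set nE := e1 ⬝ᵥ e1 with hnE
  set nEp := e2 ⬝ᵥ e2 with hnEp
  set nQ1 := q1 ⬝ᵥ q1 with hnQ1
  set nQ2 := q2 ⬝ᵥ q2 with hnQ2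
  set nU1 := u1 ⬝ᵥ (W1 - z1) with hnU1
  set nU2 := u2 ⬝ᵥ (W2 - z2) with hnU2
  set nT1 := (W1 - z1) ⬝ᵥ (W1 - z1) with hnT1
  set nT2 := (W2 - z2) ⬝ᵥ (W2 - z2) with hnT2
  clear_value na nb nc nam nE nEp nQ1 nQ2 nU1 nU2 nT1 nT2
  clear hprox hzmin hexp1 hprox' hq12e hH12 hBd F1 hzkey F2 hq2e hTW hdot3 hH2 hAd F3 hdu2 F4 hLsum hTW0 hE1 hE2 hGdiff hu1' hrec hEpexp hcross hr2 hy2 hM2b hM1b hX2 hXle hXge hprod hy1e F7y1 hduE F8 hW1 hW2 hu1 hu2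
  have hmain : 0 ≤ σ^3*β*((fl1 + g1 + (ρ/2)*nQ1 + nU1
          + (β/2)*nT1)
        - (fl2 + g2 + (ρ/2)*nQ2 + nU2
          + (β/2)*nT2))
      + 4*σ*(1-σ)*(nE - nEp)
      + 8*σ^2*(σ*τ + κ₁)^2*nam
      - σ^3*β*(τ - (κ₁ + β)/2)*na + 4*σ^4*τ^2*na
      - σ^3*β*((μ - κ₂)/2)*nb + 8*σ^2*κ₃^2*nb
      - σ^2*nc := by
    have f1 := mul_nonneg (sq_nonneg σ) (sub_nonneg.mpr h1c)
    have f4 := mul_nonneg (sq_nonneg σ) (sub_nonneg.mpr F8')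
    linarith [f1, f4, F6, F7]
  have hnn : 0 ≤ (σ^3*β*((fl1 + g1 + (ρ/2)*nQ1 + nU1
          + (β/2)*nT1)
        - (fl2 + g2 + (ρ/2)*nQ2 + nU2
          + (β/2)*nT2))
      + 4*σ*(1-σ)*(nE - nEp)
      + 8*σ^2*(σ*τ + κ₁)^2*nam
      - σ^3*β*(τ - (κ₁ + β)/2)*na + 4*σ^4*τ^2*na
      - σ^3*β*((μ - κ₂)/2)*nb + 8*σ^2*κ₃^2*nb
      - σ^2*nc) / (σ^3*β) := div_nonneg hmain (by positivity)
  have hfin : fl2 + g2 + (ρ/2)*nQ2 + nU2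
        + (β/2)*nT2
        + (4*(1-σ)/(σ^2*β))*nEp
        + (8*(σ*τ + κ₁)^2/(σ*β))*na
        + (τ - (κ₁ + β)/2 - 4*σ*τ^2/β - 8*(σ*τ + κ₁)^2/(σ*β))*na
        + ((μ - κ₂)/2 - 8*κ₃^2/(σ*β))*nb
        + (1/(σ*β))*nc
        + (σ^3*β*((fl1 + g1 + (ρ/2)*nQ1 + nU1
          + (β/2)*nT1)
        - (fl2 + g2 + (ρ/2)*nQ2 + nU2
          + (β/2)*nT2))
      + 4*σ*(1-σ)*(nE - nEp)
      + 8*σ^2*(σ*τ + κ₁)^2*nam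
      - σ^3*β*(τ - (κ₁ + β)/2)*na + 4*σ^4*τ^2*na
      - σ^3*β*((μ - κ₂)/2)*nb + 8*σ^2*κ₃^2*nb
      - σ^2*nc) / (σ^3*β)
      = fl1 + g1 + (ρ/2)*nQ1 + nU1
        + (β/2)*nT1
        + (4*(1-σ)/(σ^2*β))*nE
        + (8*(σ*τ + κ₁)^2/(σ*β))*nam := by
    field_simp
    ring
  linarith [hnn, hfin]


/-- **Lemma 4.1 (sufficient decrease of the regularized augmented Lagrangian)**: if
`2τ ≥ β`, then for every `n ≥ 1` the PALM iterates satisfy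
`Ψ_{n+1} + C₂‖W̃_{n+1}−W̃_n‖² + C₃‖P̃_{n+1}−P̃_n‖² + C₄‖u_{n+1}−u_n‖² ≤ Ψ_n`
(the case `n ≥ 1` being encoded by the index shift `n ↦ n+1`). -/
theorem PALM_sufficient_decrease
    (s t Nstar M l qd : ℕ)
    (hs : 0 < s) (ht : 0 < t) (hM : 0 < M)
    (mi : Fin s → ℕ) (nj : Fin t → ℕ) (hmi : ∀ i, 0 < mi i) (hnj : ∀ j, 0 < nj j)
    (Csys : Matrix (Fin qd) (Jn t nj) ℝ) (Dsys : Matrix (Fin qd) (Jm s mi) ℝ)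
    (Asys : Fin M → Matrix (Jn t nj) (Jn t nj) ℝ)
    (B2sys : Fin M → Matrix (Jn t nj) (Jm s mi) ℝ)
    (B1sys : Matrix (Jn t nj) (Fin l) ℝ)
    (Amat : Matrix (JA s t Nstar mi nj) (Jp s t mi nj × Jp s t mi nj) ℝ)
    (hAstruct : ∀ (x : Jp s t mi nj × Jp s t mi nj → ℝ) (a : Jm s mi) (b : Jn t nj),
      (Amat *ᵥ x) (Sum.inr (a, b)) = x (Sum.inr a, Sum.inl b))
    (γ ρ μ β τ σ : ℝ)
    (hγ : 0 < γ) (hρ : 0 < ρ) (hμ : 0 < μ) (hβ : 0 < β) (hτ : 0 < τ)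
    (hσ0 : 0 < σ) (hσ1 : σ ≤ 1)
    (Wseq : ℕ → Jp s t mi nj × Jp s t mi nj → ℝ)
    (Pseq : ℕ → Jm s mi × Jn t nj → ℝ)
    (zseq : ℕ → Jp s t mi nj × Jp s t mi nj → ℝ)
    (useq : ℕ → Jp s t mi nj × Jp s t mi nj → ℝ)
    (hiter : PALMIter s t Nstar M l qd mi nj Csys Dsys Asys B2sys B1sys Amat
      γ ρ μ β τ σ Wseq Pseq zseq useq)
    (h2τ : β ≤ 2*τ) :
    ∀ nn : ℕ,
      PsiLag s t Nstar qd mi nj Csys Dsys Amat γ ρ β τ σ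
          (Wseq (nn+2)) (Pseq (nn+2)) (zseq (nn+2)) (useq (nn+2))
          (Wseq (nn+1)) (useq (nn+1))
        + C2const s t Nstar mi nj Amat ρ β τ σ
            * ((Wseq (nn+2) - Wseq (nn+1)) ⬝ᵥ (Wseq (nn+2) - Wseq (nn+1)))
        + C3const s t Nstar mi nj Amat ρ μ β σ
            * ((Pseq (nn+2) - Pseq (nn+1)) ⬝ᵥ (Pseq (nn+2) - Pseq (nn+1)))
        + C4const β σ * ((useq (nn+2) - useq (nn+1)) ⬝ᵥ (useq (nn+2) - useq (nn+1)))
      ≤ PsiLag s t Nstar qd mi nj Csys Dsys Amat γ ρ β τ σ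
          (Wseq (nn+1)) (Pseq (nn+1)) (zseq (nn+1)) (useq (nn+1))
          (Wseq nn) (useq nn) := by
  obtain ⟨hPstep, hzstep, hWstep, hUstep⟩ := hiter
  intro nn
  obtain ⟨hz1mem, -⟩ := hzstep nn
  obtain ⟨-, hz2min⟩ := hzstep (nn+1)
  simp only [PsiLag, C2const, C3const, C4const, Hpen]
  exact PALM_core Amat (Bmat s t Nstar mi nj) ρ μ β τ σ hρ hμ hβ hτ hσ0 hσ1 h2τ
    (kap1 s t Nstar mi nj Amat ρ) (kap2 s t Nstar mi nj ρ) (kap3 s t Nstar mi nj Amat ρ)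
    rfl rfl rfl
    (Wseq nn) (Wseq (nn+1)) (Wseq (nn+2)) (zseq (nn+1)) (zseq (nn+2))
    (useq nn) (useq (nn+1)) (useq (nn+2)) (Pseq (nn+1)) (Pseq (nn+2))
    (flin s t qd mi nj Csys Dsys (zseq (nn+1))) (flin s t qd mi nj Csys Dsys (zseq (nn+2)))
    (gfun s t mi nj γ (Pseq (nn+1))) (gfun s t mi nj γ (Pseq (nn+2)))
    (hPstep (nn+1) (Pseq (nn+1)))
    (hz2min (zseq (nn+1)) hz1mem)
    (hWstep nn) (hWstep (nn+1)) (hUstep nn) (hUstep (nn+1))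
end
end

section
/- Let κ₁, κ₂, κ₃ ≥ 0 be real numbers and suppose the real parameters σ, β, μ, τ satisfy the parameter selection criterion (30): 0 < σ < 1/24; ς := 1 − 32κ₁/β − 128κ₁²/β² − 24κ₁σ/β − 24σ > 0; β > (4κ₁/(1−24σ))·(4 + 3σ + √(24 − 168σ + 9σ²)); μ > κ₂ + 16κ₃²/(σβ); max{β/2, (β/(24σ))(1 − 16κ₁/β − √ς)} < τ < (β/(24σ))(1 − 16κ₁/β + √ς). Then min{C₂, C₃, C₄} > 0, and there exist real numbers γ₁ ≠ 0 and γ₂ ≠ 0 such that 1/γ₁ − κ₁/(2γ₁²) = 1/β and 1/γ₂ − κ₁/(2γ₂²) = 2/β. -/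
theorem gamma_exists_aux (κ β d : ℝ) (hβ : 0 < β) (hd : 0 < d) (h : 0 < 1 - 2*d*κ/β) :
    ∃ γ : ℝ, γ ≠ 0 ∧ 1/γ - κ/(2*γ^2) = d/β := by
  set t := Real.sqrt (1 - 2*d*κ/β) with htdef
  have ht2 : t^2 = 1 - 2*d*κ/β := Real.sq_sqrt h.le
  have ht0 : 0 < t := Real.sqrt_pos.mpr h
  have ht2' : t^2*β = β - 2*d*κ := by rw [ht2]; field_simp
  refine ⟨β*(1+t)/(2*d), by positivity, ?_⟩
  have hγ : β*(1+t)/(2*d) ≠ 0 := by positivity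
  field_simp
  linear_combination (-1) * ht2'

/-- **Lemma 4.2**: under the parameter selection criterion (30), the descent constants
`C₂, C₃, C₄` are all positive, and there exist `γ₁, γ₂ ≠ 0` with
`1/γ₁ − κ₁/(2γ₁²) = 1/β` and `1/γ₂ − κ₁/(2γ₂²) = 2/β`. -/
theorem parameter_selection_criterion_consequences
    (κ₁ κ₂ κ₃ σ β μ τ : ℝ)
    (hκ₁ : 0 ≤ κ₁) (hκ₂ : 0 ≤ κ₂) (hκ₃ : 0 ≤ κ₃)
    (hβ0 : 0 < β) (hμ0 : 0 < μ) (hτ0 : 0 < τ)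
    (hσ0 : 0 < σ) (hσ : σ < 1/24)
    (hς : 0 < 1 - 32*κ₁/β - 128*κ₁^2/β^2 - 24*κ₁*σ/β - 24*σ)
    (hβ : β > (4*κ₁/(1 - 24*σ)) * (4 + 3*σ + Real.sqrt (24 - 168*σ + 9*σ^2)))
    (hμ : μ > κ₂ + 16*κ₃^2/(σ*β))
    (hτ1 : max (β/2)
        ((β/(24*σ)) * (1 - 16*κ₁/β
          - Real.sqrt (1 - 32*κ₁/β - 128*κ₁^2/β^2 - 24*κ₁*σ/β - 24*σ))) < τ)
    (hτ2 : τ < (β/(24*σ)) * (1 - 16*κ₁/β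
          + Real.sqrt (1 - 32*κ₁/β - 128*κ₁^2/β^2 - 24*κ₁*σ/β - 24*σ))) :
    0 < min (min (τ - (κ₁+β)/2 - 4*σ*τ^2/β - 8*(σ*τ+κ₁)^2/(σ*β))
        ((μ-κ₂)/2 - 8*κ₃^2/(σ*β))) (1/(σ*β)) ∧
    ∃ γ₁ γ₂ : ℝ, γ₁ ≠ 0 ∧ γ₂ ≠ 0 ∧
      1/γ₁ - κ₁/(2*γ₁^2) = 1/β ∧ 1/γ₂ - κ₁/(2*γ₂^2) = 2/β := by
  have hβ' : β ≠ 0 := ne_of_gt hβ0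
  have hσ' : σ ≠ 0 := ne_of_gt hσ0
  have hσβ : 0 < σ*β := mul_pos hσ0 hβ0
  set ς := 1 - 32*κ₁/β - 128*κ₁^2/β^2 - 24*κ₁*σ/β - 24*σ with hςdef
  set s := Real.sqrt ς with hsdef
  have hs2 : s^2 = ς := Real.sq_sqrt hς.le
  have hs0 : 0 < s := Real.sqrt_pos.mpr hς
  have hτ1b : (β/(24*σ)) * (1 - 16*κ₁/β - s) < τ :=
    lt_of_le_of_lt (le_max_right _ _) hτ1
  have h24σ : (0:ℝ) < 24*σ := by linarith
  rw [div_mul_eq_mul_div, div_lt_iff₀ h24σ] at hτ1b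
  rw [div_mul_eq_mul_div, lt_div_iff₀ h24σ] at hτ2
  have e1 : β * (1 - 16*κ₁/β - s) = β - 16*κ₁ - β*s := by field_simp; try ring
  have e2 : β * (1 - 16*κ₁/β + s) = β - 16*κ₁ + β*s := by field_simp; try ring
  rw [e1] at hτ1b
  rw [e2] at hτ2
  have h1' : β - 16*κ₁ - β*s < 24*σ*τ := by linarith
  have h2' : 24*σ*τ < β - 16*κ₁ + β*s := by linarith
  have hs2' : β^2*s^2 = β^2 - 32*κ₁*β - 128*κ₁^2 - 24*κ₁*σ*β - 24*σ*β^2 := by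
    rw [hs2, hςdef]; field_simp; try ring
  have hp1 : 0 < β*s - (24*σ*τ - β + 16*κ₁) := by linarith
  have hp2 : 0 < β*s + (24*σ*τ - β + 16*κ₁) := by linarith
  have hpp := mul_pos hp1 hp2
  have expand : (β*s - (24*σ*τ - β + 16*κ₁)) * (β*s + (24*σ*τ - β + 16*κ₁))
      = β^2*s^2 - (24*σ*τ - β + 16*κ₁)^2 := by ring
  rw [expand, hs2'] at hpp
  have key : 0 < σ*β*τ - σ*β*(κ₁+β)/2 - 4*σ^2*τ^2 - 8*(σ*τ+κ₁)^2 := by linarith [hpp]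
  have hC2 : 0 < τ - (κ₁+β)/2 - 4*σ*τ^2/β - 8*(σ*τ+κ₁)^2/(σ*β) := by
    have heq : τ - (κ₁+β)/2 - 4*σ*τ^2/β - 8*(σ*τ+κ₁)^2/(σ*β)
        = (σ*β*τ - σ*β*(κ₁+β)/2 - 4*σ^2*τ^2 - 8*(σ*τ+κ₁)^2)/(σ*β) := by
      field_simp; try ring
    rw [heq]
    exact div_pos key hσβ
  have hC3 : 0 < (μ-κ₂)/2 - 8*κ₃^2/(σ*β) := by
    have h16 : 16*κ₃^2/(σ*β) = 2*(8*κ₃^2/(σ*β)) := by ring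
    linarith
  have hC4 : 0 < 1/(σ*β) := by positivity
  refine ⟨lt_min (lt_min hC2 hC3) hC4, ?_⟩
  have hκβ : 32*κ₁ < β := by
    have h1 : 0 ≤ 128*κ₁^2/β^2 := by positivity
    have h2 : 0 ≤ 24*κ₁*σ/β := by positivity
    have h3 : 32*κ₁/β < 1 := by rw [hςdef] at hς; linarith
    rw [div_lt_one hβ0] at h3; exact h3
  have hg1 : 0 < 1 - 2*(1:ℝ)*κ₁/β := by
    rw [sub_pos, div_lt_one hβ0]; linarith
  have hg2 : 0 < 1 - 2*(2:ℝ)*κ₁/β := by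
    rw [sub_pos, div_lt_one hβ0]; linarith
  obtain ⟨γ₁, hγ₁, hγ₁eq⟩ := gamma_exists_aux κ₁ β 1 hβ0 one_pos hg1
  obtain ⟨γ₂, hγ₂, hγ₂eq⟩ := gamma_exists_aux κ₁ β 2 hβ0 two_pos hg2
  exact ⟨γ₁, γ₂, hγ₁, hγ₂, hγ₁eq, hγ₂eq⟩
end

section
/- In the PALM setting, for every n ≥ 0 the iterates satisfy the identity u_{n+1} = (1 − 1/σ)(u_{n+1} − u_n) + ((τ − β)·Id − ρ𝒜ᵀ𝒜)(W̃_n − W̃_{n+1}) − ρ𝒜ᵀ(𝒜W̃_{n+1} + ℬP̃_{n+1}). Consequently, if in addition 0 < β ≤ 2τ and 0 < σ ≤ 1, then ‖u_{n+1}‖ ≤ (1/σ − 1)‖u_{n+1} − u_n‖ + (τ + κ₁)‖W̃_{n+1} − W̃_n‖ + ρ‖𝒜ᵀ(𝒜W̃_{n+1} + ℬP̃_{n+1})‖. -/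
open Matrix

noncomputable section

section aux

variable {ι κ : Type*} [Fintype ι] [Fintype κ]

lemma enorm'_eq_norm (v : ι → ℝ) :
    enorm' v = ‖(WithLp.equiv 2 (ι → ℝ)).symm v‖ := by
  rw [EuclideanSpace.norm_eq]
  simp only [enorm', dotProduct, WithLp.equiv_symm_apply, WithLp.ofLp_toLp, Real.norm_eq_abs, sq_abs,
    sq, abs_mul_abs_self]

lemma enorm'_nonneg (v : ι → ℝ) : 0 ≤ enorm' v := by
  rw [enorm'_eq_norm]; exact norm_nonneg _

lemma enorm'_add_le (v w : ι → ℝ) : enorm' (v + w) ≤ enorm' v + enorm' w := by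
  simp only [enorm'_eq_norm, WithLp.equiv_symm_apply, WithLp.toLp_add]
  exact norm_add_le _ _

lemma enorm'_smul (c : ℝ) (v : ι → ℝ) : enorm' (c • v) = |c| * enorm' v := by
  simp only [enorm'_eq_norm, WithLp.equiv_symm_apply, WithLp.toLp_smul, norm_smul, Real.norm_eq_abs]

lemma enorm'_neg (v : ι → ℝ) : enorm' (-v) = enorm' v := by
  have : (-1 : ℝ) • v = -v := by simp
  rw [← this, enorm'_smul]; simp

lemma enorm'_mulVec_le [DecidableEq ι] (A : Matrix κ ι ℝ) (v : ι → ℝ) :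
    enorm' (A *ᵥ v) ≤ spectralNorm' A * enorm' v := by
  simp only [enorm'_eq_norm]
  have h : (WithLp.equiv 2 (κ → ℝ)).symm (A *ᵥ v)
      = LinearMap.toContinuousLinearMap (Matrix.toEuclideanLin A)
        ((WithLp.equiv 2 (ι → ℝ)).symm v) := by
    simp [WithLp.equiv_symm_apply, Matrix.toEuclideanLin_toLp]
  rw [h]
  exact (LinearMap.toContinuousLinearMap (Matrix.toEuclideanLin A)).le_opNorm _

end aux

/-- **Key intermediate steps in the Appendix proof of Theorem 4.3**: the PALM iterates
satisfy the identity
`u_{n+1} = (1 − 1/σ)(u_{n+1} − u_n) + ((τ−β)Id − ρ𝒜ᵀ𝒜)(W̃_n − W̃_{n+1}) − ρ𝒜ᵀ(𝒜W̃_{n+1} + ℬP̃_{n+1})`,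
and consequently, if `0 < β ≤ 2τ` and `0 < σ ≤ 1`, the bound
`‖u_{n+1}‖ ≤ (1/σ − 1)‖u_{n+1} − u_n‖ + (τ + κ₁)‖W̃_{n+1} − W̃_n‖ + ρ‖𝒜ᵀ(𝒜W̃_{n+1} + ℬP̃_{n+1})‖`. -/
theorem PALM_dual_variable_identity_and_bound
    (m n Nstar : ℕ) (hm : 0 < m) (hn : 0 < n)
    (𝒜 : Matrix (Fin Nstar ⊕ (Fin m × Fin n)) ((Fin n ⊕ Fin m) × (Fin n ⊕ Fin m)) ℝ)
    (ℬ : Matrix (Fin Nstar ⊕ (Fin m × Fin n)) (Fin m × Fin n) ℝ)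
    (hℬ : ℬ = Matrix.fromRows 0 (-1))
    (ρ μ β τ σ : ℝ)
    (hρ : 0 < ρ) (hμ : 0 < μ) (hβ : 0 < β) (hτ : 0 < τ) (hσ0 : 0 < σ) (hσ1 : σ ≤ 1)
    (W : ℕ → (Fin n ⊕ Fin m) × (Fin n ⊕ Fin m) → ℝ)
    (P : ℕ → Fin m × Fin n → ℝ)
    (z : ℕ → (Fin n ⊕ Fin m) × (Fin n ⊕ Fin m) → ℝ)
    (u : ℕ → (Fin n ⊕ Fin m) × (Fin n ⊕ Fin m) → ℝ)
    (hW : ∀ nn, W (nn+1) = W nn - τ⁻¹ •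
      (ρ • (𝒜ᵀ *ᵥ (𝒜 *ᵥ W nn + ℬ *ᵥ P (nn+1))) + u nn + β • (W nn - z (nn+1))))
    (hu : ∀ nn, u (nn+1) = u nn + (σ * β) • (W (nn+1) - z (nn+1))) :
    (∀ nn : ℕ,
      u (nn+1) = (1 - 1/σ) • (u (nn+1) - u nn)
        + ((τ - β) • (W nn - W (nn+1)) - ρ • ((𝒜ᵀ * 𝒜) *ᵥ (W nn - W (nn+1))))
        - ρ • (𝒜ᵀ *ᵥ (𝒜 *ᵥ W (nn+1) + ℬ *ᵥ P (nn+1)))) ∧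
    (β ≤ 2 * τ → ∀ nn : ℕ,
      enorm' (u (nn+1)) ≤ (1/σ - 1) * enorm' (u (nn+1) - u nn)
        + (τ + ρ * spectralNorm' (𝒜ᵀ * 𝒜)) * enorm' (W (nn+1) - W nn)
        + ρ * enorm' (𝒜ᵀ *ᵥ (𝒜 *ᵥ W (nn+1) + ℬ *ᵥ P (nn+1)))) := by
  have hτ0 : (τ : ℝ) ≠ 0 := hτ.ne'
  have hσne : (σ : ℝ) ≠ 0 := hσ0.ne'
  have key : ∀ nn : ℕ,
      u (nn+1) = (1 - 1/σ) • (u (nn+1) - u nn)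
        + ((τ - β) • (W nn - W (nn+1)) - ρ • ((𝒜ᵀ * 𝒜) *ᵥ (W nn - W (nn+1))))
        - ρ • (𝒜ᵀ *ᵥ (𝒜 *ᵥ W (nn+1) + ℬ *ᵥ P (nn+1))) := by
    intro nn
    have h1 : u nn = τ • (W nn - W (nn+1))
        - ρ • (𝒜ᵀ *ᵥ (𝒜 *ᵥ W nn + ℬ *ᵥ P (nn+1)))
        - β • (W nn - z (nn+1)) := by
      rw [hW nn]
      match_scalars <;> field_simp <;> ring
    rw [hu nn, h1]
    simp only [Matrix.mulVec_add, Matrix.mulVec_sub, ← Matrix.mulVec_mulVec]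
    match_scalars <;> field_simp <;> ring
  refine ⟨key, fun hβ2 nn => ?_⟩
  have hid := key nn
  set a := u (nn+1) - u nn with ha
  set b := W nn - W (nn+1) with hb
  set c := 𝒜ᵀ *ᵥ (𝒜 *ᵥ W (nn+1) + ℬ *ᵥ P (nn+1)) with hc
  have step1 : enorm' (u (nn+1)) ≤
      enorm' ((1 - 1/σ) • a) + enorm' ((τ - β) • b - ρ • ((𝒜ᵀ * 𝒜) *ᵥ b))
        + enorm' ((-ρ) • c) := by
    calc enorm' (u (nn+1))
        = enorm' ((1 - 1/σ) • a + ((τ - β) • b - ρ • ((𝒜ᵀ * 𝒜) *ᵥ b)) + (-ρ) • c) := by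
          rw [hid]; congr 1; module
      _ ≤ enorm' ((1 - 1/σ) • a + ((τ - β) • b - ρ • ((𝒜ᵀ * 𝒜) *ᵥ b))) + enorm' ((-ρ) • c) :=
          enorm'_add_le _ _
      _ ≤ enorm' ((1 - 1/σ) • a) + enorm' ((τ - β) • b - ρ • ((𝒜ᵀ * 𝒜) *ᵥ b))
            + enorm' ((-ρ) • c) := by
          gcongr; exact enorm'_add_le _ _
  have hσinv : 1 ≤ 1/σ := by
    rw [le_div_iff₀ hσ0]; linarith
  have e1 : enorm' ((1 - 1/σ) • a) = (1/σ - 1) * enorm' a := by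
    rw [enorm'_smul, abs_of_nonpos (by linarith)]; ring_nf
  have e3 : enorm' ((-ρ) • c) = ρ * enorm' c := by
    rw [enorm'_smul, abs_neg, abs_of_pos hρ]
  have hbW : enorm' b = enorm' (W (nn+1) - W nn) := by
    rw [hb, show W nn - W (nn+1) = -(W (nn+1) - W nn) by module, enorm'_neg]
  have e2 : enorm' ((τ - β) • b - ρ • ((𝒜ᵀ * 𝒜) *ᵥ b)) ≤
      (τ + ρ * spectralNorm' (𝒜ᵀ * 𝒜)) * enorm' (W (nn+1) - W nn) := by
    have h4 : enorm' ((τ - β) • b - ρ • ((𝒜ᵀ * 𝒜) *ᵥ b))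
        ≤ enorm' ((τ - β) • b) + enorm' ((-ρ) • ((𝒜ᵀ * 𝒜) *ᵥ b)) := by
      have : (τ - β) • b - ρ • ((𝒜ᵀ * 𝒜) *ᵥ b)
          = (τ - β) • b + (-ρ) • ((𝒜ᵀ * 𝒜) *ᵥ b) := by module
      rw [this]; exact enorm'_add_le _ _
    have h5 : enorm' ((τ - β) • b) ≤ τ * enorm' b := by
      rw [enorm'_smul]
      have : |τ - β| ≤ τ := abs_le.2 ⟨by linarith, by linarith⟩
      exact mul_le_mul_of_nonneg_right this (enorm'_nonneg _)
    have h6 : enorm' ((-ρ) • ((𝒜ᵀ * 𝒜) *ᵥ b)) ≤ ρ * (spectralNorm' (𝒜ᵀ * 𝒜) * enorm' b) := by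
      rw [enorm'_smul, abs_neg, abs_of_pos hρ]
      exact mul_le_mul_of_nonneg_left (enorm'_mulVec_le _ _) hρ.le
    calc enorm' ((τ - β) • b - ρ • ((𝒜ᵀ * 𝒜) *ᵥ b))
        ≤ τ * enorm' b + ρ * (spectralNorm' (𝒜ᵀ * 𝒜) * enorm' b) := by
          refine h4.trans (add_le_add h5 h6)
      _ = (τ + ρ * spectralNorm' (𝒜ᵀ * 𝒜)) * enorm' b := by ring
      _ = (τ + ρ * spectralNorm' (𝒜ᵀ * 𝒜)) * enorm' (W (nn+1) - W nn) := by rw [hbW]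
  calc enorm' (u (nn+1)) ≤ enorm' ((1 - 1/σ) • a)
        + enorm' ((τ - β) • b - ρ • ((𝒜ᵀ * 𝒜) *ᵥ b)) + enorm' ((-ρ) • c) := step1
    _ ≤ (1/σ - 1) * enorm' a + (τ + ρ * spectralNorm' (𝒜ᵀ * 𝒜)) * enorm' (W (nn+1) - W nn)
        + ρ * enorm' c := by rw [e1, e3]; gcongr
end
end
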